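/- Let n ≥ 1. For each 1 ≤ i ≤ n let Γ_i be a ranked alphabet, and let Δ_0, Δ_1, …, Δ_n be ranked alphabets; let ψ_i be a linear tree homomorphism from Γ_i to Δ_{i−1} and φ_i a complete tree homomorphism from Γ_i to Δ_i, and let K_i ⊆ T_{Γ_i} be an arbitrary tree language. Let B_i = { (ψ̂_i(s), φ̂_i(s)) | s ∈ K_i } and let ℓ ∈ ℕ satisfy ℓ > height(ψ_i(γ)) for every 1 ≤ i ≤ n and every γ ∈ Γ_i. Then for every pair (t, u) in the composition B_1 ; ⋯ ; B_n: if SP^ℓ_{n+1}(t) ≠ ∅ then SP^ℓ_1(u) ≠ ∅. (In the paper the languages K_i are regular, but regularity is not needed.) -/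

import Mathlib

namespace Paper

/-- Trees over a ranked alphabet `(Γ, ar)` as a W-type. -/
abbrev Tree {Γ : Type} (ar : Γ → ℕ) : Type := WType (fun g : Γ => Fin (ar g))

variable {Γ : Type} {ar : Γ → ℕ}

/-- Root symbol of a tree. -/
def root : Tree ar → Γ
  | ⟨g, _⟩ => g

/-- `inPos t w` holds iff `w` is a position of `t`. -/
def inPos : Tree ar → List ℕ → Prop
  | _, [] => True
  | ⟨g, f⟩, i :: w => ∃ h : i < ar g, inPos (f ⟨i, h⟩) w

/-- The set of positions of a tree. -/
def pos (t : Tree ar) : Set (List ℕ) := {w | inPos t w}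

/-- Subtree of `t` at position `w` (junk value if `w` is not a position of `t`). -/
def subtree : Tree ar → List ℕ → Tree ar
  | t, [] => t
  | ⟨g, f⟩, i :: w => if h : i < ar g then subtree (f ⟨i, h⟩) w else ⟨g, f⟩

/-- Branching positions of `t` together with two distinct successor directions. -/
def branch (t : Tree ar) : Set (List ℕ × ℕ × ℕ) :=
  {p | p.1 ∈ pos t ∧ 2 ≤ ar (root (subtree t p.1)) ∧
       p.2.1 < ar (root (subtree t p.1)) ∧ p.2.2 < ar (root (subtree t p.1)) ∧ p.2.1 ≠ p.2.2}

/-- Branching positions of `t` along the path from `w` to `w ++ w''`. -/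
def branchPath (t : Tree ar) (w w'' : List ℕ) : Set (List ℕ) :=
  {v | ∃ w', w' <+: w'' ∧ v = w ++ w' ∧ ∃ i j, (w ++ w', i, j) ∈ branch t}

/-- First projections of a set of triples. -/
def SPof (S : Set (List ℕ × ℕ × ℕ)) : Set (List ℕ) := {w | ∃ i j, (w, i, j) ∈ S}

/-- The sets `SSP^ℓ_n(t)`. -/
def SSP (ℓ : ℕ) : ℕ → Tree ar → Set (List ℕ × ℕ × ℕ)
  | 0, t => branch t
  | n+1, t =>
      {p | p ∈ branch t ∧
        (∃ w₁ ∈ SPof (SSP ℓ n (subtree t (p.1 ++ [p.2.1]))),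
          ℓ ^ (n+1) ≤ (branchPath t (p.1 ++ [p.2.1]) w₁ ∩ SPof (SSP ℓ n t)).ncard) ∧
        (∃ w₂ ∈ SPof (SSP ℓ n (subtree t (p.1 ++ [p.2.2]))),
          ℓ ^ (n+1) ≤ (branchPath t (p.1 ++ [p.2.2]) w₂ ∩ SPof (SSP ℓ n t)).ncard)}

/-- The sets `SP^ℓ_n(t)`. -/
def SP (ℓ n : ℕ) (t : Tree ar) : Set (List ℕ) := SPof (SSP ℓ n t)

/-- Height of a tree: 0 for leaves, otherwise 1 + maximum height of the subtrees. -/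
def height : Tree ar → ℕ
  | ⟨_, f⟩ => Finset.univ.sup fun i => height (f i) + 1

/-- Arity function for the alphabet `Δ` extended with `k` nullary variables. -/
def extAr {Δ : Type} (arΔ : Δ → ℕ) (k : ℕ) : Δ ⊕ Fin k → ℕ := Sum.elim arΔ fun _ => 0

/-- Trees over `Δ` with variables `x_0, …, x_{k-1}`: the set `T_Δ(X_k)`. -/
abbrev TreeX {Δ : Type} (arΔ : Δ → ℕ) (k : ℕ) : Type := Tree (extAr arΔ k)

variable {Δ : Type} {arΔ : Δ → ℕ}

/-- Substitution `s[u 0, …, u (k-1)]` of trees for the variables. -/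
def subst {k : ℕ} (u : Fin k → Tree arΔ) : TreeX arΔ k → Tree arΔ
  | ⟨Sum.inl d, f⟩ => ⟨d, fun i => subst u (f i)⟩
  | ⟨Sum.inr i, _⟩ => u i

/-- The tree map `ĥ` induced by a tree homomorphism `h`. -/
def applyHom {arΓ : Γ → ℕ} (h : ∀ g : Γ, TreeX arΔ (arΓ g)) : Tree arΓ → Tree arΔ
  | ⟨g, f⟩ => subst (fun i => applyHom h (f i)) (h g)

/-- Number of occurrences of the variable `x_i` in a tree of `T_Δ(X_k)`. -/
def varCount {k : ℕ} (i : Fin k) : TreeX arΔ k → ℕ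
  | ⟨Sum.inl _, f⟩ => ∑ j, varCount i (f j)
  | ⟨Sum.inr j, _⟩ => if j = i then 1 else 0

/-- A tree homomorphism is linear if every variable occurs at most once in each image. -/
def Linear {arΓ : Γ → ℕ} (h : ∀ g : Γ, TreeX arΔ (arΓ g)) : Prop :=
  ∀ (g : Γ) (i : Fin (arΓ g)), varCount i (h g) ≤ 1

/-- A tree homomorphism is complete if every variable occurs at least once in each image. -/
def Complete {arΓ : Γ → ℕ} (h : ∀ g : Γ, TreeX arΔ (arΓ g)) : Prop :=
  ∀ (g : Γ) (i : Fin (arΓ g)), 1 ≤ varCount i (h g)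

section Basic
variable {Γ : Type} {ar : Γ → ℕ}

lemma inPos_nil (t : Tree ar) : inPos t [] := by cases t; exact trivial

@[simp] lemma subtree_nil (t : Tree ar) : subtree t [] = t := by cases t; rfl

lemma inPos_cons_iff {g : Γ} {f : Fin (ar g) → Tree ar} {i : ℕ} {w : List ℕ} :
    inPos (⟨g, f⟩ : Tree ar) (i :: w) ↔ ∃ h : i < ar g, inPos (f ⟨i, h⟩) w := Iff.rfl

lemma subtree_cons {g : Γ} {f : Fin (ar g) → Tree ar} {i : ℕ} {w : List ℕ} (h : i < ar g) :
    subtree (⟨g, f⟩ : Tree ar) (i :: w) = subtree (f ⟨i, h⟩) w := by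
  simp [subtree, h]

lemma inPos_append {t : Tree ar} {w v : List ℕ} :
    inPos t (w ++ v) ↔ inPos t w ∧ inPos (subtree t w) v := by
  induction w generalizing t with
  | nil => simp [inPos_nil]
  | cons i w ih =>
    cases t with
    | mk g f =>
      constructor
      · rintro ⟨h, hw⟩
        have hw' := (ih (t := f ⟨i, h⟩)).1 hw
        exact ⟨⟨h, hw'.1⟩, by rw [subtree_cons h]; exact hw'.2⟩
      · rintro ⟨⟨h, hw⟩, hv⟩
        rw [subtree_cons h] at hv
        exact ⟨h, (ih (t := f ⟨i, h⟩)).2 ⟨hw, hv⟩⟩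

lemma inPos_of_append {t : Tree ar} {w v : List ℕ} (h : inPos t (w ++ v)) : inPos t w :=
  (inPos_append.1 h).1

lemma inPos_prefix {t : Tree ar} {w v : List ℕ} (hp : w <+: v) (h : inPos t v) : inPos t w := by
  obtain ⟨e, rfl⟩ := hp; exact inPos_of_append h

lemma subtree_append {t : Tree ar} {w v : List ℕ} (h : inPos t w) :
    subtree t (w ++ v) = subtree (subtree t w) v := by
  induction w generalizing t with
  | nil => simp
  | cons i w ih =>
    cases t with
    | mk g f =>
      obtain ⟨hi, hw⟩ := h
      rw [List.cons_append, subtree_cons hi, subtree_cons hi, ih hw]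

lemma inPos_append' {t : Tree ar} {w v : List ℕ} (h : inPos t w)
    (h2 : inPos (subtree t w) v) : inPos t (w ++ v) := inPos_append.2 ⟨h, h2⟩

lemma height_pos {t : Tree ar} (h : 1 ≤ ar (root t)) : 1 ≤ height t := by
  cases t with
  | mk g f =>
    have h' : 1 ≤ ar g := h
    calc 1 ≤ height (f ⟨0, h'⟩) + 1 := Nat.le_add_left _ _
    _ ≤ _ := Finset.le_sup (f := fun i => height (f i) + 1) (Finset.mem_univ _)

lemma length_add_height_le {t : Tree ar} {w : List ℕ} (h : inPos t w) :
    w.length + height (subtree t w) ≤ height t := by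
  induction w generalizing t with
  | nil => simp
  | cons i w ih =>
    cases t with
    | mk g f =>
      obtain ⟨hi, hw⟩ := h
      rw [subtree_cons hi]
      have := ih hw
      have h2 : height (f ⟨i, hi⟩) + 1 ≤ height (⟨g, f⟩ : Tree ar) :=
        Finset.le_sup (f := fun i => height (f i) + 1) (Finset.mem_univ _)
      simp only [List.length_cons]
      omega

lemma length_lt_height {t : Tree ar} {w : List ℕ} (h : inPos t w)
    (h2 : 1 ≤ ar (root (subtree t w))) : w.length < height t := by
  have := length_add_height_le h
  have := height_pos h2
  omega

end Basic

section QDefs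
variable {Γ : Type} {ar : Γ → ℕ}

def QB (t : Tree ar) (i j : ℕ) : Prop :=
  2 ≤ ar (root t) ∧ i < ar (root t) ∧ j < ar (root t) ∧ i ≠ j

def QCset (P : Tree ar → Prop) (t : Tree ar) (i : ℕ) (w₁ : List ℕ) : Set (List ℕ) :=
  {v | ∃ w', w' <+: w₁ ∧ v = i :: w' ∧ inPos t v ∧ P (subtree t v)}

def QC (P : Tree ar → Prop) (m : ℕ) (t : Tree ar) (i : ℕ) : Prop :=
  ∃ w₁, inPos t (i :: w₁) ∧ P (subtree t (i :: w₁)) ∧ m ≤ (QCset P t i w₁).ncard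

def QS (ℓ : ℕ) : ℕ → Tree ar → ℕ → ℕ → Prop
  | 0, t, i, j => QB t i j
  | k+1, t, i, j => QB t i j ∧ QC (fun u => ∃ a b, QS ℓ k u a b) (ℓ^(k+1)) t i ∧
      QC (fun u => ∃ a b, QS ℓ k u a b) (ℓ^(k+1)) t j

def QP (ℓ k : ℕ) (t : Tree ar) : Prop := ∃ i j, QS ℓ k t i j

lemma QS_QB {ℓ k : ℕ} {t : Tree ar} {i j : ℕ} (h : QS ℓ k t i j) : QB t i j := by
  cases k with
  | zero => exact h
  | succ k => exact h.1

lemma prefixes_finite (w₁ : List ℕ) : {w' | w' <+: w₁}.Finite := by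
  apply Set.Finite.subset (w₁.inits.finite_toSet)
  intro w hw
  simpa [List.mem_inits] using hw

lemma finite_of_prefixes {S : Set (List ℕ)} {x w₁ : List ℕ}
    (h : ∀ v ∈ S, ∃ w', w' <+: w₁ ∧ v = x ++ w') : S.Finite := by
  apply Set.Finite.subset (Set.Finite.image (fun w => x ++ w) (prefixes_finite w₁))
  intro v hv
  obtain ⟨w', hw', rfl⟩ := h v hv
  exact ⟨w', hw', rfl⟩

lemma QCset_finite (P : Tree ar → Prop) (t : Tree ar) (i : ℕ) (w₁ : List ℕ) :
    (QCset P t i w₁).Finite := by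
  apply finite_of_prefixes (x := [i]) (w₁ := w₁)
  rintro v ⟨w', hw', rfl, -⟩
  exact ⟨w', hw', rfl⟩

lemma QC_mono {P P' : Tree ar → Prop} {m m' : ℕ} {t : Tree ar} {i : ℕ}
    (hP : ∀ u, P u → P' u) (hm : m' ≤ m) (h : QC P m t i) : QC P' m' t i := by
  obtain ⟨w₁, h1, h2, h3⟩ := h
  refine ⟨w₁, h1, hP _ h2, le_trans hm (le_trans h3 ?_)⟩
  apply Set.ncard_le_ncard _ (QCset_finite _ _ _ _)
  rintro v ⟨w', hw', rfl, h4, h5⟩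
  exact ⟨w', hw', rfl, h4, hP _ h5⟩

lemma QS_antitone {ℓ : ℕ} (hl : 1 ≤ ℓ) {k : ℕ} {t : Tree ar} {i j : ℕ}
    (h : QS ℓ (k+1) t i j) : QS ℓ k t i j := by
  induction k generalizing t i j with
  | zero => exact h.1
  | succ k ih =>
    obtain ⟨hb, hci, hcj⟩ := h
    have hm : ℓ ^ (k+1) ≤ ℓ ^ (k+2) := Nat.pow_le_pow_right hl (by omega)
    have hP : ∀ u : Tree ar, (∃ a b, QS ℓ (k+1) u a b) → ∃ a b, QS ℓ k u a b := by
      rintro u ⟨a, b, hu⟩; exact ⟨a, b, ih hu⟩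
    exact ⟨hb, QC_mono hP hm hci, QC_mono hP hm hcj⟩

lemma QP_antitone {ℓ : ℕ} (hl : 1 ≤ ℓ) {k k' : ℕ} (hk : k' ≤ k) {t : Tree ar}
    (h : QP ℓ k t) : QP ℓ k' t := by
  induction k with
  | zero => cases Nat.le_zero.1 hk; exact h
  | succ k ih =>
    rcases Nat.lt_or_ge k' (k+1) with h' | h'
    · obtain ⟨a, b, hs⟩ := h
      exact ih (by omega) ⟨a, b, QS_antitone hl hs⟩
    · have : k' = k + 1 := by omega
      subst this; exact h

lemma QC_exists_finset {P : Tree ar → Prop} {m : ℕ} {t : Tree ar} {i : ℕ}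
    (h : QC P m t i) :
    ∃ C : Finset (List ℕ), m ≤ C.card ∧ (∀ v ∈ C, ∀ v' ∈ C, v <+: v' ∨ v' <+: v) ∧
      (∀ v ∈ C, (∃ w', v = i :: w') ∧ inPos t v ∧ P (subtree t v)) := by
  obtain ⟨w₁, h1, h2, h3⟩ := h
  have hfin := QCset_finite P t i w₁
  refine ⟨hfin.toFinset, ?_, ?_, ?_⟩
  · rwa [Set.ncard_eq_toFinset_card _ hfin] at h3
  · intro v hv v' hv'
    rw [Set.Finite.mem_toFinset] at hv hv'
    obtain ⟨w', hw', rfl, -⟩ := hv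
    obtain ⟨w'', hw'', rfl, -⟩ := hv'
    rcases List.prefix_or_prefix_of_prefix hw' hw'' with h | h
    · exact Or.inl (List.cons_prefix_cons.2 ⟨rfl, h⟩)
    · exact Or.inr (List.cons_prefix_cons.2 ⟨rfl, h⟩)
  · intro v hv
    rw [Set.Finite.mem_toFinset] at hv
    obtain ⟨w', hw', rfl, h4, h5⟩ := hv
    exact ⟨⟨w', rfl⟩, h4, h5⟩

lemma QC_of_finset {P : Tree ar → Prop} {m : ℕ} {t : Tree ar} {i : ℕ}
    (hm : 1 ≤ m) (C : Finset (List ℕ)) (hcard : m ≤ C.card)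
    (hch : ∀ v ∈ C, ∀ v' ∈ C, v <+: v' ∨ v' <+: v)
    (hmem : ∀ v ∈ C, (∃ w', v = i :: w') ∧ inPos t v ∧ P (subtree t v)) :
    QC P m t i := by
  have hne : C.Nonempty := Finset.card_pos.1 (by omega)
  obtain ⟨V, hV, hVmax⟩ := C.exists_max_image (fun v => v.length) hne
  have hpre : ∀ v ∈ C, v <+: V := by
    intro v hv
    rcases hch v hv V hV with h | h
    · exact h
    · have hlen : V.length = v.length := le_antisymm h.length_le (hVmax v hv)
      rw [← h.eq_of_length hlen]
  obtain ⟨⟨w₁, rfl⟩, hVpos, hVP⟩ := hmem V hV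
  refine ⟨w₁, hVpos, hVP, ?_⟩
  have hsub : ↑C ⊆ QCset P t i w₁ := by
    intro v hv
    obtain ⟨⟨w', rfl⟩, hpos, hP⟩ := hmem v hv
    have := hpre _ hv
    rw [List.cons_prefix_cons] at this
    exact ⟨w', this.2, rfl, hpos, hP⟩
  calc m ≤ C.card := hcard
  _ = (↑C : Set (List ℕ)).ncard := (Set.ncard_coe_finset C).symm
  _ ≤ _ := Set.ncard_le_ncard hsub (QCset_finite _ _ _ _)

end QDefs

section Bridge
variable {Γ : Type} {ar : Γ → ℕ}

lemma inPos_singleton {t : Tree ar} {i : ℕ} : inPos t [i] ↔ i < ar (root t) := by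
  cases t with
  | mk g f =>
    constructor
    · rintro ⟨h, -⟩; exact h
    · intro h; exact ⟨h, inPos_nil _⟩

lemma QS_succ_def {ℓ k : ℕ} {t : Tree ar} {i j : ℕ} :
    QS ℓ (k+1) t i j ↔ QB t i j ∧ QC (QP ℓ k) (ℓ^(k+1)) t i ∧ QC (QP ℓ k) (ℓ^(k+1)) t j :=
  Iff.rfl

lemma mem_SPof {S : Set (List ℕ × ℕ × ℕ)} {w : List ℕ} :
    w ∈ SPof S ↔ ∃ i j, (w, i, j) ∈ S := Iff.rfl

lemma append_cons_eq (w : List ℕ) (i : ℕ) (w' : List ℕ) :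
    (w ++ [i]) ++ w' = w ++ (i :: w') := by simp

lemma SSP_iff_QS {ℓ : ℕ} : ∀ (k : ℕ) (t : Tree ar) (w : List ℕ) (i j : ℕ),
    (w, i, j) ∈ SSP ℓ k t ↔ (inPos t w ∧ QS ℓ k (subtree t w) i j) := by
  intro k
  induction k with
  | zero =>
    intro t w i j
    show (w, i, j) ∈ branch t ↔ _
    constructor
    · rintro ⟨h1, h2, h3, h4, h5⟩; exact ⟨h1, h2, h3, h4, h5⟩
    · rintro ⟨h1, h2, h3, h4, h5⟩; exact ⟨h1, h2, h3, h4, h5⟩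
  | succ k ih =>
    intro t w i j
    have hset : ∀ (hw : inPos t w) (i : ℕ) (_ : i < ar (root (subtree t w))) (w₁ : List ℕ),
        branchPath t (w ++ [i]) w₁ ∩ SPof (SSP ℓ k t)
          = (fun x => w ++ x) '' QCset (QP ℓ k) (subtree t w) i w₁ := by
      intro hw i hi w₁
      ext v
      constructor
      · rintro ⟨⟨w', hw', hveq, -⟩, a, b, hSSP⟩
        have hv2 : v = w ++ (i :: w') := by rw [hveq, append_cons_eq]
        rw [ih] at hSSP
        obtain ⟨hvpos, hvQS⟩ := hSSP
        rw [hv2] at hvpos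
        have h3 := inPos_append.1 hvpos
        refine ⟨i :: w', ⟨w', hw', rfl, h3.2, a, b, ?_⟩, hv2.symm⟩
        rw [← subtree_append hw, ← hv2]
        exact hvQS
      · rintro ⟨x, ⟨w', hw', rfl, hxpos, a, b, hxQS⟩, rfl⟩
        have hst : subtree t (w ++ (i :: w')) = subtree (subtree t w) (i :: w') :=
          subtree_append hw
        have hpos : inPos t (w ++ (i :: w')) := inPos_append' hw hxpos
        have hqb := QS_QB hxQS
        beta_reduce
        refine ⟨⟨w', hw', (append_cons_eq w i w').symm, a, b, ?_⟩, a, b, ?_⟩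
        · rw [append_cons_eq]
          exact ⟨hpos, by rw [hst]; exact hqb.1, by rw [hst]; exact hqb.2.1,
            by rw [hst]; exact hqb.2.2.1, hqb.2.2.2⟩
        · rw [ih]
          exact ⟨hpos, by rw [hst]; exact hxQS⟩
    have hcond : ∀ (hw : inPos t w) (i : ℕ), i < ar (root (subtree t w)) →
        ((∃ w₁ ∈ SPof (SSP ℓ k (subtree t (w ++ [i]))),
            ℓ ^ (k+1) ≤ (branchPath t (w ++ [i]) w₁ ∩ SPof (SSP ℓ k t)).ncard)
          ↔ QC (QP ℓ k) (ℓ^(k+1)) (subtree t w) i) := by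
      intro hw i hi
      have hipos : inPos (subtree t w) [i] := inPos_singleton.2 hi
      have hsub : subtree t (w ++ [i]) = subtree (subtree t w) [i] := subtree_append hw
      constructor
      · rintro ⟨w₁, ⟨a, b, hmem⟩, hcount⟩
        rw [ih] at hmem
        obtain ⟨h1, h2⟩ := hmem
        rw [hsub] at h1
        refine ⟨w₁, ?_, ?_, ?_⟩
        · exact inPos_append' (t := subtree t w) (w := [i]) hipos h1
        · refine ⟨a, b, ?_⟩
          rwa [show (i :: w₁ : List ℕ) = [i] ++ w₁ from rfl, subtree_append hipos, ← hsub]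
        · rw [hset hw i hi w₁, Set.ncard_image_of_injective _
            (fun x y hxy => List.append_cancel_left hxy)] at hcount
          exact hcount
      · rintro ⟨w₁, h1, ⟨a, b, h2⟩, h3⟩
        refine ⟨w₁, ⟨a, b, ?_⟩, ?_⟩
        · rw [ih]
          constructor
          · have h4 := (inPos_append (t := subtree t w) (w := [i]) (v := w₁)).1 h1
            rw [hsub]
            exact h4.2
          · rw [hsub, ← subtree_append hipos]
            exact h2
        · rw [hset hw i hi w₁, Set.ncard_image_of_injective _
            (fun x y hxy => List.append_cancel_left hxy)]
          exact h3
    show (w, i, j) ∈ {p : List ℕ × ℕ × ℕ | p ∈ branch t ∧ _ ∧ _} ↔ _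
    constructor
    · rintro ⟨hb, hA, hB⟩
      have hw : inPos t w := hb.1
      refine ⟨hw, ⟨hb.2.1, hb.2.2.1, hb.2.2.2.1, hb.2.2.2.2⟩, ?_, ?_⟩
      · exact (hcond hw i hb.2.2.1).1 hA
      · exact (hcond hw j hb.2.2.2.1).1 hB
    · rintro ⟨hw, ⟨hb1, hb2, hb3, hb4⟩, hA, hB⟩
      exact ⟨⟨hw, hb1, hb2, hb3, hb4⟩, (hcond hw i hb2).2 hA, (hcond hw j hb3).2 hB⟩

lemma mem_SP_iff {ℓ k : ℕ} {t : Tree ar} {v : List ℕ} :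
    v ∈ SP ℓ k t ↔ inPos t v ∧ QP ℓ k (subtree t v) := by
  constructor
  · rintro ⟨a, b, h⟩
    rw [SSP_iff_QS] at h
    exact ⟨h.1, a, b, h.2⟩
  · rintro ⟨h1, a, b, h2⟩
    exact ⟨a, b, (SSP_iff_QS k t v a b).2 ⟨h1, h2⟩⟩

end Bridge

section Subst
variable {Δ : Type} {arΔ : Δ → ℕ} {r : ℕ}

/-- Walk a path into a tree with variables; return the first variable hit (with the
remaining path), if any. -/
def firstVar : TreeX arΔ r → List ℕ → Option (Fin r × List ℕ)
  | ⟨Sum.inr c, _⟩, v => some (c, v)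
  | ⟨Sum.inl _, _⟩, [] => none
  | ⟨Sum.inl δ, f⟩, (i :: v) =>
      if h : i < arΔ δ then firstVar (f ⟨i, h⟩) v else none

lemma root_subst_inl {u : Fin r → Tree arΔ} {h : TreeX arΔ r} {δ : Δ}
    (hr : root h = Sum.inl δ) : root (subst u h) = δ := by
  cases h with
  | mk x f => cases x with
    | inl d => cases hr; rfl
    | inr c => cases hr

lemma subst_mk_inl {u : Fin r → Tree arΔ} {δ : Δ} {f : Fin (extAr arΔ r (Sum.inl δ)) → TreeX arΔ r} :
    subst u ⟨Sum.inl δ, f⟩ = ⟨δ, fun i => subst u (f i)⟩ := rfl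

lemma firstVar_none_spec {u : Fin r → Tree arΔ} {h : TreeX arΔ r} {v : List ℕ}
    (hv : inPos (subst u h) v) (hn : firstVar h v = none) :
    inPos h v ∧ subtree (subst u h) v = subst u (subtree h v) ∧
      ∃ δ, root (subtree h v) = Sum.inl δ := by
  induction v generalizing h with
  | nil =>
    cases h with
    | mk x f =>
      cases x with
      | inl δ => exact ⟨inPos_nil _, by simp, δ, rfl⟩
      | inr c => simp [firstVar] at hn
  | cons i v ih =>
    cases h with
    | mk x f =>
      cases x with
      | inl δ =>
        rw [subst_mk_inl] at hv
        obtain ⟨hi, hv'⟩ := hv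
        have hi' : i < arΔ δ := hi
        rw [firstVar, dif_pos hi'] at hn
        obtain ⟨h1, h2, h3⟩ := ih (h := f ⟨i, hi'⟩) hv' hn
        refine ⟨⟨hi', h1⟩, ?_, ?_⟩
        · rw [subst_mk_inl, subtree_cons hi,
            subtree_cons (show i < extAr arΔ r (Sum.inl δ) from hi')]
          exact h2
        · rw [subtree_cons (show i < extAr arΔ r (Sum.inl δ) from hi')]
          exact h3
      | inr c => simp [firstVar] at hn
  
lemma firstVar_some_spec {h : TreeX arΔ r} {v v'' : List ℕ} {c : Fin r}
    (hs : firstVar h v = some (c, v'')) :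
    ∃ q, v = q ++ v'' ∧ inPos h q ∧ root (subtree h q) = Sum.inr c := by
  induction v generalizing h with
  | nil =>
    cases h with
    | mk x f =>
      cases x with
      | inl δ => simp [firstVar] at hs
      | inr c' =>
        rw [firstVar] at hs
        obtain ⟨h1, h2⟩ := Prod.mk.injEq .. ▸ (Option.some_injective _ hs)
        subst h1
        exact ⟨[], by simp [h2], inPos_nil _, by rw [subtree_nil]; rfl⟩
  | cons i v ih =>
    cases h with
    | mk x f =>
      cases x with
      | inl δ =>
        rw [firstVar] at hs
        by_cases hi : i < arΔ δ
        · rw [dif_pos hi] at hs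
          obtain ⟨q, rfl, hq1, hq2⟩ := ih hs
          exact ⟨i :: q, rfl, ⟨hi, hq1⟩, by rwa [subtree_cons (show i < extAr arΔ r (Sum.inl δ) from hi)]⟩
        · rw [dif_neg hi] at hs; cases hs
      | inr c' =>
        rw [firstVar] at hs
        obtain ⟨h1, h2⟩ := Prod.mk.injEq .. ▸ (Option.some_injective _ hs)
        subst h1
        exact ⟨[], by simp [h2], inPos_nil _, by rw [subtree_nil]; rfl⟩

lemma subst_at_var {u : Fin r → Tree arΔ} {h : TreeX arΔ r} {q : List ℕ} {c : Fin r}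
    (hq : inPos h q) (hroot : root (subtree h q) = Sum.inr c) (v'' : List ℕ) :
    (inPos (subst u h) (q ++ v'') ↔ inPos (u c) v'') ∧
      subtree (subst u h) (q ++ v'') = subtree (u c) v'' := by
  induction q generalizing h with
  | nil =>
    cases h with
    | mk x f =>
      cases x with
      | inl δ => cases hroot
      | inr c' =>
        have : c' = c := by injection hroot
        subst this
        exact ⟨Iff.rfl, rfl⟩
  | cons i q ih =>
    cases h with
    | mk x f =>
      cases x with
      | inl δ =>
        obtain ⟨hi, hq'⟩ := hq
        rw [subtree_cons hi] at hroot
        have hi' : i < arΔ δ := hi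
        obtain ⟨h1, h2⟩ := ih (h := f ⟨i, hi⟩) hq' hroot
        constructor
        · rw [List.cons_append, subst_mk_inl]
          constructor
          · rintro ⟨hj, hp⟩
            exact h1.1 (by convert hp using 2 <;> rfl)
          · intro hp
            exact ⟨hi', h1.2 hp⟩
        · rw [List.cons_append, subst_mk_inl, subtree_cons hi']
          exact h2
      | inr c' => obtain ⟨hi, -⟩ := hq; exact absurd hi (by simp [extAr])

lemma subst_at_nonvar {u : Fin r → Tree arΔ} {h : TreeX arΔ r} {q : List ℕ} {δ : Δ}
    (hq : inPos h q) (hroot : root (subtree h q) = Sum.inl δ) :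
    inPos (subst u h) q ∧ subtree (subst u h) q = subst u (subtree h q) := by
  induction q generalizing h with
  | nil => exact ⟨inPos_nil _, by simp⟩
  | cons i q ih =>
    cases h with
    | mk x f =>
      cases x with
      | inl δ' =>
        obtain ⟨hi, hq'⟩ := hq
        rw [subtree_cons hi] at hroot
        have hi' : i < arΔ δ' := hi
        obtain ⟨h1, h2⟩ := ih (h := f ⟨i, hi⟩) hq' hroot
        refine ⟨⟨hi', by convert h1 using 2 <;> rfl⟩, ?_⟩
        rw [subst_mk_inl, subtree_cons hi', subtree_cons hi]
        exact h2
      | inr c' => obtain ⟨hi, -⟩ := hq; exact absurd hi (by simp [extAr])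

lemma varCount_pos_of_var {h : TreeX arΔ r} {q : List ℕ} {c : Fin r}
    (hq : inPos h q) (hroot : root (subtree h q) = Sum.inr c) :
    1 ≤ varCount c h := by
  induction q generalizing h with
  | nil =>
    cases h with
    | mk x f =>
      cases x with
      | inl δ => cases hroot
      | inr c' => have : c' = c := by injection hroot
                  simp [varCount, this]
  | cons i q ih =>
    cases h with
    | mk x f =>
      cases x with
      | inl δ =>
        obtain ⟨hi, hq'⟩ := hq
        rw [subtree_cons hi] at hroot
        have := ih hq' hroot
        calc 1 ≤ varCount c (f ⟨i, hi⟩) := this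
        _ ≤ ∑ j, varCount c (f j) := Finset.single_le_sum
          (f := fun j => varCount c (f j)) (fun j _ => Nat.zero_le _) (Finset.mem_univ _)
      | inr c' => obtain ⟨hi, -⟩ := hq; exact absurd hi (by simp [extAr])

lemma varCount_subtree_le {h : TreeX arΔ r} {q : List ℕ} (hq : inPos h q) (c : Fin r) :
    varCount c (subtree h q) ≤ varCount c h := by
  induction q generalizing h with
  | nil => simp
  | cons i q ih =>
    cases h with
    | mk x f =>
      cases x with
      | inl δ =>
        obtain ⟨hi, hq'⟩ := hq
        rw [subtree_cons hi]
        calc varCount c (subtree (f ⟨i, hi⟩) q) ≤ varCount c (f ⟨i, hi⟩) := ih hq'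
        _ ≤ ∑ j, varCount c (f j) := Finset.single_le_sum
          (f := fun j => varCount c (f j)) (fun j _ => Nat.zero_le _) (Finset.mem_univ _)
      | inr c' => obtain ⟨hi, -⟩ := hq; exact absurd hi (by simp [extAr])

lemma var_pos_unique {h : TreeX arΔ r} {q q' : List ℕ} {c : Fin r}
    (hlin : varCount c h ≤ 1)
    (hq : inPos h q) (hroot : root (subtree h q) = Sum.inr c)
    (hq' : inPos h q') (hroot' : root (subtree h q') = Sum.inr c) : q = q' := by
  induction q generalizing h q' with
  | nil =>
    cases h with
    | mk x f =>
      cases x with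
      | inl δ => cases hroot
      | inr c' =>
        cases q' with
        | nil => rfl
        | cons i q' => obtain ⟨hi, -⟩ := hq'; exact absurd hi (by simp [extAr])
  | cons i q ih =>
    cases h with
    | mk x f =>
      cases x with
      | inl δ =>
        obtain ⟨hi, hqt⟩ := hq
        rw [subtree_cons hi] at hroot
        cases q' with
        | nil => cases hroot'
        | cons i' q'' =>
          obtain ⟨hi', hqt'⟩ := hq'
          rw [subtree_cons hi'] at hroot'
          by_cases hii : i = i'
          · subst hii
            have : q = q'' := ih (h := f ⟨i, hi⟩)
              (le_trans (Finset.single_le_sum (f := fun j => varCount c (f j))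
                (fun j _ => Nat.zero_le _) (Finset.mem_univ (⟨i, hi⟩ : Fin _))) hlin)
              hqt hroot hqt' hroot'
            rw [this]
          · exfalso
            have h1 : 1 ≤ varCount c (f ⟨i, hi⟩) := varCount_pos_of_var hqt hroot
            have h2 : 1 ≤ varCount c (f ⟨i', hi'⟩) := varCount_pos_of_var hqt' hroot'
            have hne : (⟨i, hi⟩ : Fin _) ≠ ⟨i', hi'⟩ := fun hc => hii (congrArg Fin.val hc)
            have h3 : (⟨i', hi'⟩ : Fin _) ∈ Finset.univ.erase (⟨i, hi⟩ : Fin _) :=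
              Finset.mem_erase.2 ⟨Ne.symm hne, Finset.mem_univ _⟩
            have h4 : varCount c (f ⟨i', hi'⟩)
                ≤ ∑ j ∈ Finset.univ.erase (⟨i, hi⟩ : Fin _), varCount c (f j) :=
              Finset.single_le_sum (f := fun j => varCount c (f j)) (fun j _ => Nat.zero_le _) h3
            have hsum : varCount c (f ⟨i, hi⟩)
                + ∑ j ∈ Finset.univ.erase (⟨i, hi⟩ : Fin _), varCount c (f j)
                = ∑ j, varCount c (f j) :=
              Finset.add_sum_erase _ (fun j => varCount c (f j)) (Finset.mem_univ _)
            have h0 : varCount c (⟨Sum.inl δ, f⟩ : TreeX arΔ r) = ∑ j, varCount c (f j) := rfl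
            omega
      | inr c' => obtain ⟨hi, -⟩ := hq; exact absurd hi (by simp [extAr])

lemma exists_var_pos {h : TreeX arΔ r} {c : Fin r} (h1 : 1 ≤ varCount c h) :
    ∃ q, inPos h q ∧ root (subtree h q) = Sum.inr c := by
  induction h with
  | mk x f ih =>
    cases x with
    | inl δ =>
      have : ∃ j, 1 ≤ varCount c (f j) := by
        by_contra hc
        push_neg at hc
        have : ∑ j, varCount c (f j) = 0 := Finset.sum_eq_zero (fun j _ => by have := hc j; omega)
        have h0 : varCount c (⟨Sum.inl δ, f⟩ : TreeX arΔ r) = ∑ j, varCount c (f j) := rfl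
        omega
      obtain ⟨j, hj⟩ := this
      obtain ⟨q, hq1, hq2⟩ := ih j hj
      refine ⟨(j : ℕ) :: q, ⟨j.isLt, ?_⟩, ?_⟩
      · convert hq1 using 2 <;> exact Fin.eta j _ 
      · rw [subtree_cons j.isLt]
        convert hq2 using 3 <;> exact Fin.eta j _
    | inr c' =>
      by_cases hc : c' = c
      · subst hc; exact ⟨[], inPos_nil _, rfl⟩
      · exfalso; simp [varCount, hc] at h1

lemma firstVar_append {h : TreeX arΔ r} {v e : List ℕ} {c : Fin r} {v'' : List ℕ}
    (hs : firstVar h v = some (c, v'')) : firstVar h (v ++ e) = some (c, v'' ++ e) := by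
  induction v generalizing h with
  | nil =>
    cases h with
    | mk x f =>
      cases x with
      | inl δ => simp [firstVar] at hs
      | inr c' =>
        rw [firstVar] at hs ⊢
        obtain ⟨h1, h2⟩ := Prod.mk.injEq .. ▸ (Option.some_injective _ hs)
        rw [h1, h2]
  | cons i v ih =>
    cases h with
    | mk x f =>
      cases x with
      | inl δ =>
        rw [firstVar] at hs
        by_cases hi : i < arΔ δ
        · rw [dif_pos hi] at hs
          rw [List.cons_append, firstVar, dif_pos hi]
          exact ih hs
        · rw [dif_neg hi] at hs; cases hs
      | inr c' =>
        rw [firstVar] at hs ⊢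
        obtain ⟨h1, h2⟩ := Prod.mk.injEq .. ▸ (Option.some_injective _ hs)
        rw [h1, h2]

lemma firstVar_none_of_append {h : TreeX arΔ r} {v e : List ℕ}
    (hn : firstVar h (v ++ e) = none) : firstVar h v = none := by
  cases hfv : firstVar h v with
  | none => rfl
  | some p =>
    exfalso
    obtain ⟨c, v''⟩ := p
    rw [firstVar_append hfv] at hn
    cases hn

end Subst

section Hom
variable {Γ Δ : Type} {arΓ : Γ → ℕ} {arΔ : Δ → ℕ} (H : ∀ g : Γ, TreeX arΔ (arΓ g))

lemma applyHom_mk {g : Γ} {f : Fin (arΓ g) → Tree arΓ} :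
    applyHom H ⟨g, f⟩ = subst (fun i => applyHom H (f i)) (H g) := rfl

lemma subtree_child {Γ' : Type} {ar' : Γ' → ℕ} {g : Γ'} {f : Fin (ar' g) → Tree ar'}
    (i : Fin (ar' g)) : subtree (⟨g, f⟩ : Tree ar') [(i : ℕ)] = f i := by
  rw [subtree_cons i.isLt]
  simp

/-- Canonical embedding of positions through a tree homomorphism, given a choice
of a variable position for each variable. -/
def mu (vps : ∀ g : Γ, ∀ i : Fin (arΓ g), List ℕ) : Tree arΓ → List ℕ → List ℕ
  | _, [] => []
  | ⟨g, f⟩, (i :: p) => if h : i < arΓ g then vps g ⟨i, h⟩ ++ mu vps (f ⟨i, h⟩) p else []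

variable (vps : ∀ g : Γ, ∀ i : Fin (arΓ g), List ℕ)

@[simp] lemma mu_nil (s : Tree arΓ) : mu vps s [] = [] := by cases s; rfl

lemma mu_cons {g : Γ} {f : Fin (arΓ g) → Tree arΓ} {i : ℕ} (h : i < arΓ g) (p : List ℕ) :
    mu vps (⟨g, f⟩ : Tree arΓ) (i :: p) = vps g ⟨i, h⟩ ++ mu vps (f ⟨i, h⟩) p := by
  rw [mu, dif_pos h]

lemma mu_spec (hvps : ∀ (g : Γ) (i : Fin (arΓ g)),
      inPos (H g) (vps g i) ∧ root (subtree (H g) (vps g i)) = Sum.inr i)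
    {s : Tree arΓ} {p : List ℕ} (hp : inPos s p) :
    inPos (applyHom H s) (mu vps s p) ∧
      subtree (applyHom H s) (mu vps s p) = applyHom H (subtree s p) := by
  induction p generalizing s with
  | nil => simp [inPos_nil]
  | cons i p ih =>
    cases s with
    | mk g f =>
      obtain ⟨hi, hp'⟩ := hp
      rw [mu_cons vps hi, applyHom_mk, subtree_cons hi]
      obtain ⟨hv1, hv2⟩ := hvps g ⟨i, hi⟩
      have hvar := subst_at_var (u := fun j => applyHom H (f j)) hv1 hv2
        (mu vps (f ⟨i, hi⟩) p)
      obtain ⟨ih1, ih2⟩ := ih hp'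
      
      exact ⟨(hvar).1.2 ih1, by rw [(hvar).2]; exact ih2⟩

lemma mu_append {s : Tree arΓ} {p p' : List ℕ} (hp : inPos s p) :
    mu vps s (p ++ p') = mu vps s p ++ mu vps (subtree s p) p' := by
  induction p generalizing s with
  | nil => simp
  | cons i p ih =>
    cases s with
    | mk g f =>
      obtain ⟨hi, hp'⟩ := hp
      rw [List.cons_append, mu_cons vps hi, mu_cons vps hi, ih hp',
        subtree_cons hi, List.append_assoc]

/-- Origin of a position of `applyHom H s` in `s`. -/
def org : Tree arΓ → List ℕ → List ℕ
  | ⟨g, f⟩, v => match firstVar (H g) v with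
    | none => []
    | some (c, v') => (c : ℕ) :: org (f c) v'

/-- Residual (in-image coordinate) of a position of `applyHom H s`. -/
def res : Tree arΓ → List ℕ → List ℕ
  | ⟨g, f⟩, v => match firstVar (H g) v with
    | none => v
    | some (c, v') => res (f c) v'

lemma org_eq {g : Γ} {f : Fin (arΓ g) → Tree arΓ} (v : List ℕ) :
    org H ⟨g, f⟩ v = match firstVar (H g) v with
      | none => []
      | some (c, v') => (c : ℕ) :: org H (f c) v' := by
  rw [org]

lemma res_eq {g : Γ} {f : Fin (arΓ g) → Tree arΓ} (v : List ℕ) :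
    res H ⟨g, f⟩ v = match firstVar (H g) v with
      | none => v
      | some (c, v') => res H (f c) v' := by
  rw [res]

lemma org_none {g : Γ} {f : Fin (arΓ g) → Tree arΓ} {v : List ℕ}
    (hfv : firstVar (H g) v = none) : org H ⟨g, f⟩ v = [] := by
  rw [org_eq _ _, hfv]

lemma org_some {g : Γ} {f : Fin (arΓ g) → Tree arΓ} {v v' : List ℕ} {c : Fin (arΓ g)}
    (hfv : firstVar (H g) v = some (c, v')) : org H ⟨g, f⟩ v = (c : ℕ) :: org H (f c) v' := by
  rw [org_eq _ _, hfv]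

lemma res_none {g : Γ} {f : Fin (arΓ g) → Tree arΓ} {v : List ℕ}
    (hfv : firstVar (H g) v = none) : res H ⟨g, f⟩ v = v := by
  rw [res_eq _ _, hfv]

lemma res_some {g : Γ} {f : Fin (arΓ g) → Tree arΓ} {v v' : List ℕ} {c : Fin (arΓ g)}
    (hfv : firstVar (H g) v = some (c, v')) : res H ⟨g, f⟩ v = res H (f c) v' := by
  rw [res_eq _ _, hfv]

lemma org_spec {s : Tree arΓ} {v : List ℕ} (hv : inPos (applyHom H s) v) :
    inPos s (org H s v) ∧
    inPos (H (root (subtree s (org H s v)))) (res H s v) ∧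
    (∃ δ, root (subtree (H (root (subtree s (org H s v)))) (res H s v)) = Sum.inl δ) ∧
    subtree (applyHom H s) v
      = subst (fun i => applyHom H (subtree (subtree s (org H s v)) [(i : ℕ)]))
          (subtree (H (root (subtree s (org H s v)))) (res H s v)) := by
  induction s generalizing v with
  | mk g f ih =>
    rcases hfv : firstVar (H g) v with - | ⟨c, v'⟩
    · rw [org_none _ hfv, res_none _ hfv]
      rw [applyHom_mk] at hv
      obtain ⟨h1, h2, h3⟩ := firstVar_none_spec hv hfv
      refine ⟨inPos_nil _, ?_, ?_, ?_⟩
      · rw [subtree_nil]; exact h1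
      · rw [subtree_nil]; exact h3
      · rw [applyHom_mk]
        simp only [subtree_nil]
        rw [h2]
        congr 1
        funext j
        rw [subtree_child]
    · rw [org_some _ hfv, res_some _ hfv]
      obtain ⟨q, rfl, hq1, hq2⟩ := firstVar_some_spec hfv
      rw [applyHom_mk] at hv
      have hvar := subst_at_var (u := fun j => applyHom H (f j)) hq1 hq2 v'
      have hv' : inPos (applyHom H (f c)) v' := (hvar).1.1 hv
      obtain ⟨i1, i2, i3, i4⟩ := ih c (v := v') hv'
      have hc : c.val < arΓ g := c.isLt
      have heta : (⟨c.val, hc⟩ : Fin (arΓ g)) = c := Fin.eta c hc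
      refine ⟨⟨hc, ?_⟩, ?_, ?_, ?_⟩
      · rw [heta]; exact i1
      · rw [subtree_cons hc, heta]; exact i2
      · rw [subtree_cons hc, heta]; exact i3
      · rw [applyHom_mk, hvar.2, subtree_cons hc, heta]
        exact i4

lemma org_res_append (s : Tree arΓ) (v e : List ℕ) :
    (org H s v <+: org H s (v ++ e)) ∧
      (org H s (v ++ e) = org H s v → res H s (v ++ e) = res H s v ++ e) := by
  induction s generalizing v e with
  | mk g f ih =>
    rcases hfv : firstVar (H g) v with - | ⟨c, v'⟩
    · constructor
      · rw [org_none _ hfv]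
        exact List.nil_prefix
      · intro h
        rcases hfv2 : firstVar (H g) (v ++ e) with - | ⟨c2, v2⟩
        · rw [res_none _ hfv, res_none _ hfv2]
        · rw [org_none _ hfv, org_some _ hfv2] at h
          cases h
    · have hfv2 : firstVar (H g) (v ++ e) = some (c, v' ++ e) := firstVar_append hfv
      rw [org_some _ hfv, org_some _ hfv2, res_some _ hfv, res_some _ hfv2]
      constructor
      · exact List.cons_prefix_cons.2 ⟨rfl, (ih c v' e).1⟩
      · intro h
        have h' : org H (f c) (v' ++ e) = org H (f c) v' := by injection h
        exact (ih c v' e).2 h'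

end Hom

section Linear
variable {Γ Δ : Type} {arΓ : Γ → ℕ} {arΔ : Δ → ℕ}

lemma arith1 {ℓ X k : ℕ} (hl : 1 ≤ ℓ) (h : ℓ^(k+2) ≤ (ℓ-1) + (ℓ-1)*X) : ℓ^(k+1) ≤ X := by
  rcases Nat.lt_or_ge X (ℓ^(k+1)) with hX | hX
  · exfalso
    have h1 : ℓ^(k+2) = ℓ * ℓ^(k+1) := by ring
    have h2 : 1 ≤ ℓ^(k+1) := Nat.one_le_pow _ _ (by omega)
    have h3 : (ℓ-1) * X ≤ (ℓ-1) * ℓ^(k+1) := Nat.mul_le_mul_left _ (by omega)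
    have h4 : (ℓ-1) * ℓ^(k+1) = ℓ * ℓ^(k+1) - ℓ^(k+1) := Nat.sub_one_mul ℓ _
    have h5 : ℓ^(k+1) ≤ ℓ * ℓ^(k+1) := Nat.le_mul_of_pos_left _ (by omega)
    have h6 : ℓ ≤ ℓ^(k+1) := Nat.le_self_pow (by omega) ℓ
    omega
  · exact hX

lemma le_pow_self' {ℓ k : ℕ} (hl : 1 ≤ ℓ) : ℓ ≤ ℓ^(k+1) := Nat.le_self_pow (by omega) ℓ

lemma one_le_pow' {ℓ k : ℕ} (hl : 1 ≤ ℓ) : 1 ≤ ℓ^k := Nat.one_le_pow _ _ (by omega)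

lemma two_le_of_fin_ne {r : ℕ} {c c' : Fin r} (h : c ≠ c') : 2 ≤ r := by
  by_contra hc
  apply h
  have h1 := c.isLt
  have h2 := c'.isLt
  apply Fin.ext
  omega

variable (ψ : ∀ g : Γ, TreeX arΔ (arΓ g)) (ℓ : ℕ)

/-- Statement A: located transfer of `Q`-structure from `ψ̂ s` back to `s`. -/
def StA (k : ℕ) : Prop := ∀ (s : Tree arΓ) (v : List ℕ),
  inPos (applyHom ψ s) v → QP ℓ (k+1) (subtree (applyHom ψ s) v) →
    inPos s (org ψ s v) ∧ QP ℓ k (subtree s (org ψ s v))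

/-- Statement B: transfer of chains from `ψ̂ s` back to `s`, losing a factor `ℓ-1`. -/
def StB (k : ℕ) : Prop := ∀ (s : Tree arΓ) (C : Finset (List ℕ)),
  (∀ v ∈ C, ∀ v' ∈ C, v <+: v' ∨ v' <+: v) →
  (∀ v ∈ C, inPos (applyHom ψ s) v ∧ QP ℓ (k+1) (subtree (applyHom ψ s) v)) →
  ∃ C' : Finset (List ℕ), (∀ p ∈ C', ∀ p' ∈ C', p <+: p' ∨ p' <+: p) ∧
    (∀ p ∈ C', inPos s p ∧ QP ℓ k (subtree s p)) ∧ C.card ≤ (ℓ-1) * C'.card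

variable {ψ} {ℓ}

lemma sideLemma (hlin : Linear ψ) (hht : ∀ g, height (ψ g) < ℓ) (hl : 1 ≤ ℓ) {k : ℕ}
    (hB : k = 0 ∨ StB ψ ℓ (k-1))
    {gp : Γ} {fp : Fin (arΓ gp) → Tree arΓ} {q : List ℕ}
    (hq : inPos (ψ gp) q) {a : ℕ}
    (hroot : ∃ δ, root (subtree (ψ gp) q) = Sum.inl δ)
    (hQC : QC (QP ℓ k) (ℓ^(k+1))
      (subst (fun i => applyHom ψ (fp i)) (subtree (ψ gp) q)) a) :
    ∃ (c : Fin (arΓ gp)) (Q : List ℕ), inPos (subtree (ψ gp) q) Q ∧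
      root (subtree (subtree (ψ gp) q) Q) = Sum.inr c ∧ (∃ Q', Q = a :: Q') ∧
      (k = 0 ∨ QC (QP ℓ (k-1)) (ℓ^k) (⟨gp, fp⟩ : Tree arΓ) (c : ℕ)) := by
  classical
  set h' : TreeX arΔ (arΓ gp) := subtree (ψ gp) q with hh'
  set u : Fin (arΓ gp) → Tree arΔ := fun i => applyHom ψ (fp i) with hu
  obtain ⟨C, hcard, hch, hmem⟩ := QC_exists_finset hQC
  set Cin := C.filter (fun v => (firstVar h' v).isSome = false) with hCin
  set Cout := C.filter (fun v => (firstVar h' v).isSome = true) with hCout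
  have hsplit : Cout.card + Cin.card = C.card := by
    rw [hCout, hCin]
    simpa using Finset.card_filter_add_card_filter_not
      (s := C) (p := fun v => (firstVar h' v).isSome = true)
  -- bound on Cin
  have hCinb : Cin.card ≤ ℓ - 1 := by
    have h0 : Cin.card ≤ (Finset.range (ℓ - 1)).card := by
      refine Finset.card_le_card_of_injOn List.length ?_ ?_
      · intro v hv
        rw [hCin, Finset.mem_coe, Finset.mem_filter] at hv
        obtain ⟨hvC, hvn⟩ := hv
        have hvn' : firstVar h' v = none := by
          cases hfv : firstVar h' v with
          | none => rfl
          | some p => rw [hfv] at hvn; simp at hvn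
        obtain ⟨-, hvpos, hvQP⟩ := hmem v hvC
        obtain ⟨hp1, hp2, δv, hp3⟩ := firstVar_none_spec hvpos hvn'
        have har : 2 ≤ arΔ (root (subtree (subst u h') v)) := by
          obtain ⟨i, j, hS⟩ := hvQP
          exact (QS_QB hS).1
        rw [hp2, root_subst_inl hp3] at har
        have har2 : 1 ≤ extAr arΔ (arΓ gp) (root (subtree h' v)) := by
          rw [hp3]; exact le_trans (by omega) har
        have hqv : inPos (ψ gp) (q ++ v) := inPos_append' hq hp1
        have hlen : (q ++ v).length < height (ψ gp) := by
          apply length_lt_height hqv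
          rw [subtree_append hq]
          exact har2
        have := hht gp
        simp only [Finset.mem_coe, Finset.mem_range, List.length_append] at *
        omega
      · intro v hv v' hv' hlen
        have hv2 : v ∈ Cin := hv
        have hv2' : v' ∈ Cin := hv'
        rw [hCin, Finset.mem_filter] at hv2 hv2'
        rcases hch v hv2.1 v' hv2'.1 with h | h
        · exact h.eq_of_length hlen
        · exact (h.eq_of_length hlen.symm).symm
    simpa using h0
  have hCoutb : ℓ^(k+1) - (ℓ-1) ≤ Cout.card := by omega
  have hCoutne : Cout.Nonempty := by
    rw [← Finset.card_pos]
    have := le_pow_self' (k := k) hl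
    omega
  obtain ⟨v₀, hv₀⟩ := hCoutne
  have hv₀C : v₀ ∈ C := (Finset.mem_filter.1 hv₀).1
  have hv₀s : (firstVar h' v₀).isSome = true := (Finset.mem_filter.1 hv₀).2
  obtain ⟨⟨c, r₀⟩, hfv₀⟩ := Option.isSome_iff_exists.1 hv₀s
  obtain ⟨Q, hv₀eq, hQpos, hQroot⟩ := firstVar_some_spec hfv₀
  have hlinQ : varCount c h' ≤ 1 :=
    le_trans (varCount_subtree_le hq c) (hlin gp c)
  -- every element of Cout crosses the same variable at the same place
  have hsame : ∀ v ∈ Cout, firstVar h' v = some (c, v.drop Q.length) ∧ v = Q ++ v.drop Q.length := by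
    intro v hv
    have hvC : v ∈ C := (Finset.mem_filter.1 hv).1
    have hvs : (firstVar h' v).isSome = true := (Finset.mem_filter.1 hv).2
    obtain ⟨⟨cv, rv⟩, hfv⟩ := Option.isSome_iff_exists.1 hvs
    obtain ⟨Qv, hveq, hQvpos, hQvroot⟩ := firstVar_some_spec hfv
    have hcv : cv = c := by
      rcases hch v hvC v₀ hv₀C with h | h
      · obtain ⟨e, he⟩ := h
        rw [← he] at hfv₀
        rw [firstVar_append hfv] at hfv₀
        exact (Prod.mk.injEq .. ▸ Option.some_injective _ hfv₀).1
      · obtain ⟨e, he⟩ := h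
        rw [← he] at hfv
        rw [firstVar_append hfv₀] at hfv
        exact ((Prod.mk.injEq .. ▸ Option.some_injective _ hfv).1).symm
    subst hcv
    have hQv : Qv = Q := var_pos_unique hlinQ hQvpos hQvroot hQpos hQroot
    subst hQv
    have hdrop : v.drop Qv.length = rv := by rw [hveq, List.drop_left]
    rw [hdrop]
    exact ⟨hfv, hveq⟩
  -- head of Q is a
  have hQhead : ∃ Q', Q = a :: Q' := by
    cases hQ : Q with
    | nil =>
      exfalso
      rw [hQ] at hQroot
      simp only [subtree_nil] at hQroot
      obtain ⟨δ, hδ⟩ := hroot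
      rw [hδ] at hQroot
      cases hQroot
    | cons q0 Q' =>
      obtain ⟨⟨w', hw'⟩, -, -⟩ := hmem v₀ hv₀C
      rw [hQ] at hv₀eq
      rw [hv₀eq] at hw'
      injection hw' with h1 h2
      refine ⟨Q', ?_⟩
      simp only [hQ, h1]
  refine ⟨c, Q, hQpos, hQroot, hQhead, ?_⟩
  cases k with
  | zero => exact Or.inl rfl
  | succ k' =>
    right
    rcases hB with hB | hB
    · cases hB
    · -- build the chain inside `applyHom ψ (fp c)`
      set C₂ := Cout.image (fun v => v.drop Q.length) with hC₂
      have hC₂card : C₂.card = Cout.card := by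
        apply Finset.card_image_of_injOn
        intro v hv v' hv' hd
        have hv2 : v ∈ Cout := hv
        have hv2' : v' ∈ Cout := hv'
        have hd' : List.drop Q.length v = List.drop Q.length v' := hd
        have e1 := (hsame v hv2).2
        have e2 := (hsame v' hv2').2
        rw [hd'] at e1
        exact e1.trans e2.symm
      have hC₂mem : ∀ r ∈ C₂, inPos (applyHom ψ (fp c)) r ∧
          QP ℓ (k'+1) (subtree (applyHom ψ (fp c)) r) := by
        intro r hr
        rw [hC₂, Finset.mem_image] at hr
        obtain ⟨v, hv, rfl⟩ := hr
        obtain ⟨-, hvpos, hvQP⟩ := hmem v (Finset.mem_filter.1 hv).1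
        have hvar := subst_at_var (u := u) hQpos hQroot (v.drop Q.length)
        rw [(hsame v hv).2] at hvpos hvQP
        constructor
        · exact hvar.1.1 hvpos
        · rw [← hvar.2]; exact hvQP
      have hC₂ch : ∀ r ∈ C₂, ∀ r' ∈ C₂, r <+: r' ∨ r' <+: r := by
        intro r hr r' hr'
        rw [hC₂, Finset.mem_image] at hr hr'
        obtain ⟨v, hv, rfl⟩ := hr
        obtain ⟨v', hv', rfl⟩ := hr'
        rcases hch v (Finset.mem_filter.1 hv).1 v' (Finset.mem_filter.1 hv').1 with h | h
        · left
          obtain ⟨e, he⟩ := h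
          refine ⟨e, ?_⟩
          have h3 : v' = Q ++ (List.drop Q.length v ++ e) := by
            rw [← he]
            conv_lhs => rw [(hsame v hv).2]
            rw [List.append_assoc]
          show List.drop Q.length v ++ e = List.drop Q.length v'
          rw [h3, List.drop_left]
        · right
          obtain ⟨e, he⟩ := h
          refine ⟨e, ?_⟩
          have h3 : v = Q ++ (List.drop Q.length v' ++ e) := by
            rw [← he]
            conv_lhs => rw [(hsame v' hv').2]
            rw [List.append_assoc]
          show List.drop Q.length v' ++ e = List.drop Q.length v
          rw [h3, List.drop_left]
      obtain ⟨C', hC'ch, hC'mem, hC'card⟩ := hB (fp c) C₂ hC₂ch hC₂mem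
      have hC'b : ℓ^(k'+1) ≤ C'.card := by
        apply arith1 hl
        have : ℓ^(k'+2) ≤ C.card := hcard
        omega
      apply QC_of_finset (one_le_pow' hl) (C'.image (fun p => (c : ℕ) :: p))
      · rw [Finset.card_image_of_injOn]
        · exact hC'b
        · intro p _ p' _ hp
          injection hp
      · intro x hx x' hx'
        rw [Finset.mem_image] at hx hx'
        obtain ⟨p, hp, rfl⟩ := hx
        obtain ⟨p', hp', rfl⟩ := hx'
        rcases hC'ch p hp p' hp' with h | h
        · exact Or.inl (List.cons_prefix_cons.2 ⟨rfl, h⟩)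
        · exact Or.inr (List.cons_prefix_cons.2 ⟨rfl, h⟩)
      · intro x hx
        rw [Finset.mem_image] at hx
        obtain ⟨p, hp, rfl⟩ := hx
        obtain ⟨hp1, hp2⟩ := hC'mem p hp
        refine ⟨⟨p, rfl⟩, ⟨c.isLt, ?_⟩, ?_⟩
        · rw [Fin.eta]; exact hp1
        · rw [subtree_cons c.isLt, Fin.eta]; exact hp2

lemma linA {k : ℕ} (hlin : Linear ψ) (hht : ∀ g, height (ψ g) < ℓ) (hl : 1 ≤ ℓ)
    (hB : k = 0 ∨ StB ψ ℓ (k-1)) : StA ψ ℓ k := by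
  intro s v hv hQP
  obtain ⟨o1, o2, o3, o4⟩ := org_spec (H := ψ) hv
  refine ⟨o1, ?_⟩
  -- destructure the subtree at the origin
  rcases hsub : subtree s (org ψ s v) with ⟨gp, fp⟩
  rw [hsub] at o2 o3 o4
  have hfam : (fun i : Fin (arΓ (root (⟨gp, fp⟩ : Tree arΓ))) =>
        applyHom ψ (subtree (⟨gp, fp⟩ : Tree arΓ) [(i : ℕ)]))
      = fun i => applyHom ψ (fp i) := by
    funext i
    exact congrArg (applyHom ψ) (subtree_child (f := fp) i)
  rw [hfam] at o4
  obtain ⟨i, j, hQS⟩ := hQP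
  have hQB := QS_QB hQS
  obtain ⟨-, hQCi, hQCj⟩ := (QS_succ_def).1 hQS
  rw [o4] at hQCi hQCj
  obtain ⟨ca, Qa, hQa1, hQa2, ⟨Qa', hQa'⟩, hka⟩ :=
    sideLemma hlin hht hl hB o2 o3 hQCi
  obtain ⟨cb, Qb, hQb1, hQb2, ⟨Qb', hQb'⟩, hkb⟩ :=
    sideLemma hlin hht hl hB o2 o3 hQCj
  have hlinc : ∀ c : Fin (arΓ gp), varCount c (subtree (ψ gp) (res ψ s v)) ≤ 1 :=
    fun c => le_trans (varCount_subtree_le o2 c) (hlin gp c)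
  have hne : ca ≠ cb := by
    intro hc
    subst hc
    have := var_pos_unique (hlinc ca) hQa1 hQa2 hQb1 hQb2
    rw [hQa', hQb'] at this
    injection this with h1 h2
    exact hQB.2.2.2 h1
  refine ⟨(ca : ℕ), (cb : ℕ), ?_⟩
  have har : 2 ≤ arΓ gp := two_le_of_fin_ne hne
  have hqb : QB (⟨gp, fp⟩ : Tree arΓ) (ca : ℕ) (cb : ℕ) :=
    ⟨har, ca.isLt, cb.isLt, fun hc => hne (Fin.ext hc)⟩
  cases k with
  | zero => exact hqb
  | succ k' =>
    rcases hka with hka | hka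
    · cases hka
    rcases hkb with hkb | hkb
    · cases hkb
    exact ⟨hqb, hka, hkb⟩

lemma linB {k : ℕ} (hlin : Linear ψ) (hht : ∀ g, height (ψ g) < ℓ) (hl : 1 ≤ ℓ)
    (hA : StA ψ ℓ k) : StB ψ ℓ k := by
  classical
  intro s C hch hmem
  refine ⟨C.image (org ψ s), ?_, ?_, ?_⟩
  · intro p hp p' hp'
    rw [Finset.mem_image] at hp hp'
    obtain ⟨v, hv, rfl⟩ := hp
    obtain ⟨v', hv', rfl⟩ := hp'
    rcases hch v hv v' hv' with h | h
    · obtain ⟨e, rfl⟩ := h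
      exact Or.inl (org_res_append ψ s v e).1
    · obtain ⟨e, rfl⟩ := h
      exact Or.inr (org_res_append ψ s v' e).1
  · intro p hp
    rw [Finset.mem_image] at hp
    obtain ⟨v, hv, rfl⟩ := hp
    exact hA s v (hmem v hv).1 (hmem v hv).2
  · apply Finset.card_le_mul_card_image
    intro p hp
    have h0 : (Finset.filter (fun x => org ψ s x = p) C).card
        ≤ (Finset.range (ℓ - 1)).card := by
      refine Finset.card_le_card_of_injOn (fun v => (res ψ s v).length) ?_ ?_
      · intro v hv
        rw [Finset.mem_coe, Finset.mem_filter] at hv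
        obtain ⟨hvC, hvorg⟩ := hv
        obtain ⟨hvpos, hvQP⟩ := hmem v hvC
        obtain ⟨o1, o2, ⟨δv, o3⟩, o4⟩ := org_spec (H := ψ) hvpos
        have har : 2 ≤ arΔ (root (subtree (applyHom ψ s) v)) := by
          obtain ⟨i, j, hS⟩ := hvQP
          exact (QS_QB hS).1
        rw [o4, root_subst_inl o3] at har
        have har2 : 1 ≤ extAr arΔ _ (root (subtree (ψ (root (subtree s (org ψ s v))))
            (res ψ s v))) := by
          rw [o3]; exact le_trans (by omega) har
        have hlen := length_lt_height o2 har2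
        have := hht (root (subtree s (org ψ s v)))
        show (res ψ s v).length ∈ Finset.range (ℓ - 1)
        rw [Finset.mem_range]
        omega
      · intro v hv v' hv' hlen
        have hv2 : v ∈ Finset.filter (fun x => org ψ s x = p) C := hv
        have hv2' : v' ∈ Finset.filter (fun x => org ψ s x = p) C := hv'
        rw [Finset.mem_filter] at hv2 hv2'
        have horg : org ψ s v = org ψ s v' := by rw [hv2.2, hv2'.2]
        have hlen' : (res ψ s v).length = (res ψ s v').length := hlen
        rcases hch v hv2.1 v' hv2'.1 with h | h
        · obtain ⟨e, rfl⟩ := h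
          have he := (org_res_append ψ s v e).2 horg.symm
          rw [he, List.length_append] at hlen'
          have he2 : e = [] := by
            cases e with
            | nil => rfl
            | cons x xs => simp at hlen'
          rw [he2, List.append_nil]
        · obtain ⟨e, rfl⟩ := h
          have he := (org_res_append ψ s v' e).2 horg
          rw [he, List.length_append] at hlen'
          have he2 : e = [] := by
            cases e with
            | nil => rfl
            | cons x xs => simp at hlen'
          rw [he2, List.append_nil]
    exact le_trans h0 (by simp)

lemma linAll (hlin : Linear ψ) (hht : ∀ g, height (ψ g) < ℓ) (hl : 1 ≤ ℓ) :
    ∀ k, StA ψ ℓ k ∧ StB ψ ℓ k := by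
  intro k
  induction k with
  | zero =>
    have hA := linA hlin hht hl (Or.inl rfl)
    exact ⟨hA, linB hlin hht hl hA⟩
  | succ k ih =>
    have hA := linA (k := k+1) hlin hht hl (Or.inr ih.2)
    exact ⟨hA, linB hlin hht hl hA⟩

end Linear

section CompleteHom
variable {Γ Δ : Type} {arΓ : Γ → ℕ} {arΔ : Δ → ℕ}

lemma exists_lcp : ∀ {p q : List ℕ}, ¬ p <+: q → ¬ q <+: p →
    ∃ (c : List ℕ) (a b : ℕ), a ≠ b ∧ (c ++ [a]) <+: p ∧ (c ++ [b]) <+: q := by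
  intro p
  induction p with
  | nil => intro q h1 h2; exact absurd (List.nil_prefix) h1
  | cons x p ih =>
    intro q h1 h2
    cases q with
    | nil => exact absurd List.nil_prefix h2
    | cons y q =>
      by_cases hxy : x = y
      · subst hxy
        have h1' : ¬ p <+: q := fun h => h1 (List.cons_prefix_cons.2 ⟨rfl, h⟩)
        have h2' : ¬ q <+: p := fun h => h2 (List.cons_prefix_cons.2 ⟨rfl, h⟩)
        obtain ⟨c, a, b, hab, hca, hcb⟩ := ih h1' h2'
        exact ⟨x :: c, a, b, hab, List.cons_prefix_cons.2 ⟨rfl, hca⟩,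
          List.cons_prefix_cons.2 ⟨rfl, hcb⟩⟩
      · exact ⟨[], x, y, hxy, List.cons_prefix_cons.2 ⟨rfl, List.nil_prefix⟩,
          List.cons_prefix_cons.2 ⟨rfl, List.nil_prefix⟩⟩

lemma no_pos_below_var {r : ℕ} {h : TreeX arΔ r} {q e : List ℕ} {c : Fin r}
    (hq : inPos h q) (hroot : root (subtree h q) = Sum.inr c)
    (he : inPos h (q ++ e)) : e = [] := by
  have he2 := (inPos_append.1 he).2
  cases e with
  | nil => rfl
  | cons i e' =>
    exfalso
    rcases hsub : subtree h q with ⟨x, f⟩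
    rw [hsub] at hroot he2
    have hx : x = Sum.inr c := hroot
    subst hx
    obtain ⟨hi, -⟩ := he2
    exact absurd hi (by simp [extAr])

lemma image_drop_spec {y : List ℕ} {D : Finset (List ℕ)} (hpre : ∀ v ∈ D, y <+: v)
    (hch : ∀ v ∈ D, ∀ v' ∈ D, v <+: v' ∨ v' <+: v) :
    (D.image (List.drop y.length)).card = D.card ∧
    (∀ r ∈ D.image (List.drop y.length), y ++ r ∈ D) ∧
    (∀ r ∈ D.image (List.drop y.length), ∀ r' ∈ D.image (List.drop y.length),
      r <+: r' ∨ r' <+: r) := by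
  have key : ∀ v ∈ D, y ++ v.drop y.length = v := by
    intro v hv; obtain ⟨e, he⟩ := hpre v hv; rw [← he, List.drop_left]
  refine ⟨?_, ?_, ?_⟩
  · apply Finset.card_image_of_injOn
    intro v hv v' hv' hd
    have hd' : v.drop y.length = v'.drop y.length := hd
    calc v = y ++ v.drop y.length := (key v hv).symm
    _ = y ++ v'.drop y.length := by rw [hd']
    _ = v' := key v' hv'
  · intro r hr
    rw [Finset.mem_image] at hr
    obtain ⟨v, hv, rfl⟩ := hr
    rw [key v hv]
    exact hv
  · intro r hr r' hr'
    rw [Finset.mem_image] at hr hr'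
    obtain ⟨v, hv, rfl⟩ := hr
    obtain ⟨v', hv', rfl⟩ := hr'
    rcases hch v hv v' hv' with h | h
    · left
      rw [← List.prefix_append_right_inj y, key v hv, key v' hv']
      exact h
    · right
      rw [← List.prefix_append_right_inj y, key v hv, key v' hv']
      exact h

lemma QC_from_chain_below {Γ' : Type} {ar' : Γ' → ℕ} {T : Tree ar'} {c0 : List ℕ} {dir : ℕ}
    {P : Tree ar' → Prop} {m : ℕ} (hm : 1 ≤ m) (hc0 : inPos T c0) (D : Finset (List ℕ))
    (hch : ∀ v ∈ D, ∀ v' ∈ D, v <+: v' ∨ v' <+: v)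
    (hmem : ∀ v ∈ D, (c0 ++ [dir]) <+: v ∧ inPos T v ∧ P (subtree T v))
    (hcard : m ≤ D.card) : QC P m (subtree T c0) dir := by
  have hpre : ∀ v ∈ D, c0 <+: v := fun v hv =>
    List.IsPrefix.trans ⟨[dir], rfl⟩ (hmem v hv).1
  obtain ⟨hc1, hc2, hc3⟩ := image_drop_spec hpre hch
  apply QC_of_finset hm (D.image (List.drop c0.length)) (by omega) hc3
  intro r hr
  have hrD := hc2 r hr
  obtain ⟨hpre', hpos', hP'⟩ := hmem _ hrD
  have hdr : [dir] <+: r := (List.prefix_append_right_inj c0).1 hpre'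
  obtain ⟨w', hw'⟩ := hdr
  refine ⟨⟨w', by rw [← hw']; rfl⟩, ?_, ?_⟩
  · exact (inPos_append.1 hpos').2
  · rw [← subtree_append hc0]
    exact hP'

lemma chain_from_QP {Γ' : Type} {ar' : Γ' → ℕ} {ℓ k : ℕ} (hl : 1 ≤ ℓ) {T : Tree ar'}
    {y : List ℕ} (hy : inPos T y) (hQP : QP ℓ (k+1) (subtree T y)) :
    ∃ D : Finset (List ℕ), (∀ v ∈ D, ∀ v' ∈ D, v <+: v' ∨ v' <+: v) ∧
      (∀ v ∈ D, y <+: v ∧ inPos T v ∧ QP ℓ k (subtree T v)) ∧ ℓ^(k+1) ≤ D.card := by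
  obtain ⟨i, j, hQS⟩ := hQP
  obtain ⟨-, hQCi, -⟩ := (QS_succ_def).1 hQS
  obtain ⟨C₀, hcard, hch, hmem⟩ := QC_exists_finset hQCi
  refine ⟨C₀.image (fun x => y ++ x), ?_, ?_, ?_⟩
  · intro v hv v' hv'
    rw [Finset.mem_image] at hv hv'
    obtain ⟨x, hx, rfl⟩ := hv
    obtain ⟨x', hx', rfl⟩ := hv'
    rcases hch x hx x' hx' with h | h
    · exact Or.inl ((List.prefix_append_right_inj y).2 h)
    · exact Or.inr ((List.prefix_append_right_inj y).2 h)
  · intro v hv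
    rw [Finset.mem_image] at hv
    obtain ⟨x, hx, rfl⟩ := hv
    obtain ⟨-, hxpos, hxQP⟩ := hmem x hx
    exact ⟨⟨x, rfl⟩, inPos_append' hy hxpos, by rw [subtree_append hy]; exact hxQP⟩
  · rw [Finset.card_image_of_injOn (fun x _ y_ _ h => List.append_cancel_left h)]
    exact hcard


lemma mu_single_mk (vps : ∀ g : Γ, ∀ i : Fin (arΓ g), List ℕ) {g : Γ}
    {f : Fin (arΓ g) → Tree arΓ} {i : ℕ} (h : i < arΓ g) :
    mu vps (⟨g, f⟩ : Tree arΓ) [i] = vps g ⟨i, h⟩ := by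
  rw [mu_cons vps h, mu_nil, List.append_nil]

lemma mu_single (vps : ∀ g : Γ, ∀ i : Fin (arΓ g), List ℕ) {t : Tree arΓ} {i : ℕ}
    (h : i < arΓ (root t)) : mu vps t [i] = vps (root t) ⟨i, h⟩ := by
  rcases t with ⟨g, f⟩
  have h' : i < arΓ g := h
  rw [mu_cons vps h', mu_nil, List.append_nil]
  rfl

lemma mu_cons' (vps : ∀ g : Γ, ∀ i : Fin (arΓ g), List ℕ) {t : Tree arΓ} {i : ℕ}
    (h : i < arΓ (root t)) (w : List ℕ) :
    vps (root t) ⟨i, h⟩ <+: mu vps t (i :: w) := by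
  rcases t with ⟨g, f⟩
  have h' : i < arΓ g := h
  rw [mu_cons vps h']
  exact ⟨_, rfl⟩

lemma mu_mono (vps : ∀ g : Γ, ∀ i : Fin (arΓ g), List ℕ) {s : Tree arΓ} {p p' : List ℕ}
    (hp' : inPos s p') (hpp : p <+: p') : mu vps s p <+: mu vps s p' := by
  obtain ⟨e, rfl⟩ := hpp
  rw [mu_append vps (inPos_of_append hp')]
  exact ⟨_, rfl⟩

variable (φ : ∀ g : Γ, TreeX arΔ (arΓ g)) (ℓ : ℕ) (vps : ∀ g : Γ, ∀ i : Fin (arΓ g), List ℕ)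

/-- Statement G: transfer of a single branching node through a complete homomorphism. -/
def StG (k : ℕ) : Prop := ∀ (gp : Γ) (fp : Fin (arΓ gp) → Tree arΓ) (d e : Fin (arΓ gp)),
  d ≠ e →
  (k = 0 ∨ QC (QP ℓ (k-1)) (ℓ^k) (⟨gp, fp⟩ : Tree arΓ) (e : ℕ)) →
  (k = 0 ∨ ∃ DC : Finset (List ℕ),
      (∀ v ∈ DC, ∀ v' ∈ DC, v <+: v' ∨ v' <+: v) ∧
      (∀ v ∈ DC, vps gp d <+: v ∧ inPos (applyHom φ ⟨gp, fp⟩) v ∧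
        QP ℓ (k-1) (subtree (applyHom φ ⟨gp, fp⟩) v)) ∧ ℓ^k ≤ DC.card) →
  ∃ (c' : List ℕ) (a : ℕ), (c' ++ [a]) <+: vps gp d ∧ inPos (applyHom φ ⟨gp, fp⟩) c' ∧
    QP ℓ k (subtree (applyHom φ ⟨gp, fp⟩) c')

/-- Statement C: transfer of chains through a complete homomorphism. -/
def StC (k : ℕ) : Prop := ∀ (s : Tree arΓ) (C : Finset (List ℕ)),
  (∀ p ∈ C, ∀ p' ∈ C, p <+: p' ∨ p' <+: p) →
  (∀ p ∈ C, inPos s p ∧ QP ℓ k (subtree s p)) →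
  ∃ Ch : Finset (List ℕ), (∀ v ∈ Ch, ∀ v' ∈ Ch, v <+: v' ∨ v' <+: v) ∧
    (∀ v ∈ Ch, inPos (applyHom φ s) v ∧ QP ℓ k (subtree (applyHom φ s) v) ∧
      ∃ p ∈ C, mu vps s p <+: v) ∧ C.card ≤ Ch.card

variable {φ} {ℓ} {vps}

lemma cG {k : ℕ} (hl : 1 ≤ ℓ)
    (hvps : ∀ (g : Γ) (i : Fin (arΓ g)),
      inPos (φ g) (vps g i) ∧ root (subtree (φ g) (vps g i)) = Sum.inr i)
    (hC' : k = 0 ∨ StC φ ℓ vps (k-1)) : StG φ ℓ vps k := by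
  intro gp fp d e hde HE HD
  obtain ⟨hvd1, hvd2⟩ := hvps gp d
  obtain ⟨hve1, hve2⟩ := hvps gp e
  have hdv : ¬ vps gp d <+: vps gp e := by
    intro hp
    obtain ⟨e', he'⟩ := hp
    have h0 : e' = [] := no_pos_below_var hvd1 hvd2 (by rw [he']; exact hve1)
    subst h0
    rw [List.append_nil] at he'
    rw [he', hve2] at hvd2
    injection hvd2 with h1
    exact hde h1.symm
  have hvd : ¬ vps gp e <+: vps gp d := by
    intro hp
    obtain ⟨e', he'⟩ := hp
    have h0 : e' = [] := no_pos_below_var hve1 hve2 (by rw [he']; exact hvd1)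
    subst h0
    rw [List.append_nil] at he'
    rw [he', hvd2] at hve2
    injection hve2 with h1
    exact hde h1
  obtain ⟨c0, a, b, hab, hca, hcb⟩ := exists_lcp hdv hvd
  have hc0posa : inPos (φ gp) (c0 ++ [a]) := inPos_prefix hca hvd1
  have hc0posb : inPos (φ gp) (c0 ++ [b]) := inPos_prefix hcb hve1
  have hc0 : inPos (φ gp) c0 := inPos_of_append hc0posa
  rcases hroot : root (subtree (φ gp) c0) with δ | cvar
  swap
  · exfalso
    have := no_pos_below_var hc0 hroot hc0posa
    cases this
  have hnv := subst_at_nonvar (u := fun i => applyHom φ (fp i)) hc0 hroot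
  have hT : applyHom φ (⟨gp, fp⟩ : Tree arΓ) = subst (fun i => applyHom φ (fp i)) (φ gp) := rfl
  rw [← hT] at hnv
  have hrootT : root (subtree (applyHom φ (⟨gp, fp⟩ : Tree arΓ)) c0) = δ := by
    rw [hnv.2, hT] at *
    exact root_subst_inl hroot
  have haa : a < arΔ δ := by
    have := (inPos_append.1 hc0posa).2
    have h2 := inPos_singleton.1 this
    rw [hroot] at h2
    exact h2
  have hbb : b < arΔ δ := by
    have := (inPos_append.1 hc0posb).2
    have h2 := inPos_singleton.1 this
    rw [hroot] at h2
    exact h2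
  have hQB : QB (subtree (applyHom φ (⟨gp, fp⟩ : Tree arΓ)) c0) a b := by
    refine ⟨?_, ?_, ?_, hab⟩ <;> rw [hrootT]
    · omega
    · exact haa
    · exact hbb
  refine ⟨c0, a, hca, hnv.1, a, b, ?_⟩
  cases k with
  | zero => exact hQB
  | succ k' =>
    rcases HE with h0 | HE
    · cases h0
    rcases HD with h0 | HD
    · cases h0
    rcases hC' with h0 | hC'
    · cases h0
    obtain ⟨DC, hDCch, hDCmem, hDCcard⟩ := HD
    rw [QS_succ_def]
    refine ⟨hQB, ?_, ?_⟩
    · -- side a : from HD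
      apply QC_from_chain_below (one_le_pow' hl) hnv.1 DC hDCch _ hDCcard
      intro v hv
      obtain ⟨h1, h2, h3⟩ := hDCmem v hv
      exact ⟨List.IsPrefix.trans hca h1, h2, h3⟩
    · -- side b : from HE via StC (k')
      obtain ⟨Ce, hCecard, hCech, hCemem⟩ := QC_exists_finset HE
      have hCemem' : ∀ x ∈ Ce, inPos (⟨gp, fp⟩ : Tree arΓ) x ∧
          QP ℓ k' (subtree (⟨gp, fp⟩ : Tree arΓ) x) :=
        fun x hx => ⟨(hCemem x hx).2.1, (hCemem x hx).2.2⟩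
      obtain ⟨Ch, hChch, hChmem, hChcard⟩ := hC' (⟨gp, fp⟩ : Tree arΓ) Ce hCech hCemem'
      apply QC_from_chain_below (one_le_pow' hl) hnv.1 Ch hChch _ (by omega)
      intro v hv
      obtain ⟨h1, h2, p, hpCe, hmup⟩ := hChmem v hv
      obtain ⟨⟨w', rfl⟩, -, -⟩ := hCemem p hpCe
      have hmu0 : vps gp e <+: mu vps (⟨gp, fp⟩ : Tree arΓ) ((e : ℕ) :: w') := by
        rw [mu_cons vps e.isLt, Fin.eta]
        exact ⟨_, rfl⟩
      exact ⟨List.IsPrefix.trans (List.IsPrefix.trans hcb hmu0) hmup, h1, h2⟩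

lemma prefix_of_prefix_length_le {x y z : List ℕ} (hx : x <+: z) (hy : y <+: z)
    (hl : x.length ≤ y.length) : x <+: y := by
  rcases List.prefix_or_prefix_of_prefix hx hy with h | h
  · exact h
  · have := List.IsPrefix.eq_of_length h (le_antisymm (h.length_le) hl)
    rw [this]

lemma cC {k : ℕ} (hl : 1 ≤ ℓ)
    (hvps : ∀ (g : Γ) (i : Fin (arΓ g)),
      inPos (φ g) (vps g i) ∧ root (subtree (φ g) (vps g i)) = Sum.inr i)
    (hG : StG φ ℓ vps k) (hC' : k = 0 ∨ StC φ ℓ vps (k-1)) : StC φ ℓ vps k := by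
  classical
  intro s C hch hmem
  rcases C.eq_empty_or_nonempty with rfl | hne
  · exact ⟨∅, by simp, by simp, by simp⟩
  obtain ⟨pN, hpN, hpNmax⟩ := C.exists_max_image (fun p => p.length) hne
  have hpre : ∀ p ∈ C, p <+: pN := by
    intro p hp
    rcases hch p hp pN hpN with h | h
    · exact h
    · have hlen : pN.length = p.length := le_antisymm h.length_le (hpNmax p hp)
      rw [← h.eq_of_length hlen]
  have hmusub : ∀ p, inPos s p → inPos (applyHom φ s) (mu vps s p) ∧
      subtree (applyHom φ s) (mu vps s p) = applyHom φ (subtree s p) :=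
    fun p hp => mu_spec φ vps hvps hp
  have hstep : ∀ p, inPos s p → ∀ dd ee : ℕ, dd ≠ ee →
      inPos s (p ++ [dd]) → inPos s (p ++ [ee]) →
      (k = 0 ∨ QC (QP ℓ (k-1)) (ℓ^k) (subtree s p) ee) →
      (k = 0 ∨ ∃ DC : Finset (List ℕ),
        (∀ v ∈ DC, ∀ v' ∈ DC, v <+: v' ∨ v' <+: v) ∧
        (∀ v ∈ DC, mu vps s (p ++ [dd]) <+: v ∧ inPos (applyHom φ s) v ∧
          QP ℓ (k-1) (subtree (applyHom φ s) v)) ∧ ℓ^k ≤ DC.card) →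
      ∃ v, inPos (applyHom φ s) v ∧ QP ℓ k (subtree (applyHom φ s) v) ∧
        mu vps s p <+: v ∧ v <+: mu vps s (p ++ [dd]) ∧
        v.length < (mu vps s (p ++ [dd])).length := by
    intro p hp dd ee hde hdd hee HE HD
    obtain ⟨hmupos, hmusubeq⟩ := hmusub p hp
    have hddlt : dd < arΓ (root (subtree s p)) :=
      inPos_singleton.1 (inPos_append.1 hdd).2
    have heelt : ee < arΓ (root (subtree s p)) :=
      inPos_singleton.1 (inPos_append.1 hee).2
    rcases hsp : subtree s p with ⟨gp, fp⟩
    have hddlt' : dd < arΓ gp := by rw [hsp] at hddlt; exact hddlt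
    have heelt' : ee < arΓ gp := by rw [hsp] at heelt; exact heelt
    have hmu_pd' : mu vps s (p ++ [dd]) = mu vps s p ++ vps gp ⟨dd, hddlt'⟩ := by
      rw [mu_append vps hp, hsp, mu_single_mk vps hddlt']
    have hsubT : subtree (applyHom φ s) (mu vps s p) = applyHom φ (⟨gp, fp⟩ : Tree arΓ) := by
      rw [hmusubeq, hsp]
    have HE' : k = 0 ∨ QC (QP ℓ (k-1)) (ℓ^k) (⟨gp, fp⟩ : Tree arΓ)
        ((⟨ee, heelt'⟩ : Fin (arΓ gp)) : ℕ) := by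
      rcases HE with h0 | HE
      · exact Or.inl h0
      · right
        rw [hsp] at HE
        exact HE
    have HD' : k = 0 ∨ ∃ DC : Finset (List ℕ),
        (∀ v ∈ DC, ∀ v' ∈ DC, v <+: v' ∨ v' <+: v) ∧
        (∀ v ∈ DC, vps gp ⟨dd, hddlt'⟩ <+: v ∧ inPos (applyHom φ (⟨gp, fp⟩ : Tree arΓ)) v ∧
          QP ℓ (k-1) (subtree (applyHom φ (⟨gp, fp⟩ : Tree arΓ)) v)) ∧ ℓ^k ≤ DC.card := by
      rcases HD with h0 | HD
      · exact Or.inl h0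
      · right
        obtain ⟨DC, hDCch, hDCmem, hDCcard⟩ := HD
        have hpre0 : ∀ v ∈ DC, mu vps s p <+: v := by
          intro v hv
          exact List.IsPrefix.trans (by rw [hmu_pd']; exact ⟨_, rfl⟩) (hDCmem v hv).1
        obtain ⟨hc1, hc2, hc3⟩ := image_drop_spec hpre0 hDCch
        refine ⟨DC.image (List.drop (mu vps s p).length), hc3, ?_, by omega⟩
        intro r hr
        have hrD := hc2 r hr
        obtain ⟨h1, h2, h3⟩ := hDCmem _ hrD
        rw [hmu_pd'] at h1
        refine ⟨(List.prefix_append_right_inj (mu vps s p)).1 h1, ?_, ?_⟩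
        · have := (inPos_append.1 h2).2
          rwa [hsubT] at this
        · have hse : subtree (applyHom φ s) (mu vps s p ++ r)
              = subtree (applyHom φ (⟨gp, fp⟩ : Tree arΓ)) r := by
            rw [subtree_append hmupos, hsubT]
          rwa [hse] at h3
    obtain ⟨c', aa, hc'a, hc'pos, hc'QP⟩ := hG gp fp ⟨dd, hddlt'⟩ ⟨ee, heelt'⟩
      (fun hcc => hde (congrArg Fin.val hcc)) HE' HD'
    refine ⟨mu vps s p ++ c', ?_, ?_, ⟨c', rfl⟩, ?_, ?_⟩
    · apply inPos_append' hmupos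
      rw [hsubT]
      exact hc'pos
    · rw [subtree_append hmupos, hsubT]
      exact hc'QP
    · rw [hmu_pd']
      exact (List.prefix_append_right_inj (mu vps s p)).2
        (List.IsPrefix.trans ⟨[aa], rfl⟩ hc'a)
    · rw [hmu_pd', List.length_append, List.length_append]
      have := hc'a.length_le
      rw [List.length_append] at this
      simp only [List.length_cons, List.length_nil] at this
      omega
  -- transferred position for the maximal element pN
  have hpNpos : inPos s pN := (hmem pN hpN).1
  obtain ⟨iN, jN, hQSN⟩ := (hmem pN hpN).2
  have hQBN := QS_QB hQSN
  have hiNlt : iN < arΓ (root (subtree s pN)) := hQBN.2.1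
  have hiN : inPos s (pN ++ [iN]) := inPos_append' hpNpos (inPos_singleton.2 hiNlt)
  have hjN : inPos s (pN ++ [jN]) := inPos_append' hpNpos (inPos_singleton.2 hQBN.2.2.1)
  have HEjN : k = 0 ∨ QC (QP ℓ (k-1)) (ℓ^k) (subtree s pN) jN := by
    cases k with
    | zero => exact Or.inl rfl
    | succ k' => exact Or.inr ((QS_succ_def.1 hQSN).2.2)
  have HDiN : k = 0 ∨ ∃ DC : Finset (List ℕ),
      (∀ v ∈ DC, ∀ v' ∈ DC, v <+: v' ∨ v' <+: v) ∧
      (∀ v ∈ DC, mu vps s (pN ++ [iN]) <+: v ∧ inPos (applyHom φ s) v ∧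
        QP ℓ (k-1) (subtree (applyHom φ s) v)) ∧ ℓ^k ≤ DC.card := by
    cases k with
    | zero => exact Or.inl rfl
    | succ k' =>
      right
      rcases hC' with h0 | hC'
      · exact absurd h0 (by omega)
      obtain ⟨Ci, hCicard, hCich, hCimem⟩ := QC_exists_finset ((QS_succ_def.1 hQSN).2.1)
      obtain ⟨ChI, hChIch, hChImem, hChIcard⟩ := hC' (subtree s pN) Ci hCich
        (fun x hx => ⟨(hCimem x hx).2.1, (hCimem x hx).2.2⟩)
      obtain ⟨hmuNpos, hmuNsub⟩ := hmusub pN hpNpos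
      refine ⟨ChI.image (fun r => mu vps s pN ++ r), ?_, ?_, ?_⟩
      · intro v hv v' hv'
        rw [Finset.mem_image] at hv hv'
        obtain ⟨r, hr, rfl⟩ := hv
        obtain ⟨r', hr', rfl⟩ := hv'
        rcases hChIch r hr r' hr' with h | h
        · exact Or.inl ((List.prefix_append_right_inj _).2 h)
        · exact Or.inr ((List.prefix_append_right_inj _).2 h)
      · intro v hv
        rw [Finset.mem_image] at hv
        obtain ⟨r, hr, rfl⟩ := hv
        obtain ⟨hr1, hr2, x, hxCi, hxmu⟩ := hChImem r hr
        refine ⟨?_, ?_, ?_⟩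
        · have hmueq : mu vps s (pN ++ [iN])
              = mu vps s pN ++ vps (root (subtree s pN)) ⟨iN, hiNlt⟩ := by
            rw [mu_append vps hpNpos, mu_single vps hiNlt]
          rw [hmueq]
          apply (List.prefix_append_right_inj _).2
          obtain ⟨⟨w', rfl⟩, -, -⟩ := hCimem x hxCi
          exact List.IsPrefix.trans (mu_cons' vps hiNlt w') hxmu
        · exact inPos_append' hmuNpos (by rw [hmuNsub]; exact hr1)
        · rw [subtree_append hmuNpos, hmuNsub]
          exact hr2
      · rw [Finset.card_image_of_injOn (fun x _ y_ _ h => List.append_cancel_left h)]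
        omega
  obtain ⟨vN, hvNpos, hvNQP, hvNmu, -, -⟩ :=
    hstep pN hpNpos iN jN hQBN.2.2.2 hiN hjN HEjN HDiN
  -- the real work : construct a good transferred position for every p ∈ C
  have hGOOD : ∀ p ∈ C, ∃ v, inPos (applyHom φ s) v ∧ QP ℓ k (subtree (applyHom φ s) v) ∧
      mu vps s p <+: v ∧ (p ≠ pN → ∃ dd : ℕ, (p ++ [dd]) <+: pN ∧
        v <+: mu vps s (p ++ [dd]) ∧ v.length < (mu vps s (p ++ [dd])).length) := by
    intro p hp
    by_cases hppN : p = pN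
    · subst hppN
      exact ⟨vN, hvNpos, hvNQP, hvNmu, fun h => absurd rfl h⟩
    · obtain ⟨rest, hrest⟩ := hpre p hp
      cases rest with
      | nil => exact absurd (by rw [← hrest, List.append_nil]) hppN
      | cons dd rest' =>
        have hpddN : (p ++ [dd]) <+: pN := ⟨rest', by rw [← hrest]; simp⟩
        have hppos : inPos s p := (hmem p hp).1
        have hpdd : inPos s (p ++ [dd]) := inPos_prefix hpddN hpNpos
        obtain ⟨i, j, hQSp⟩ := (hmem p hp).2
        have hQBp := QS_QB hQSp
        by_cases hidd : i = dd
        · -- use e := j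
          have heene : dd ≠ j := by rw [← hidd]; exact hQBp.2.2.2
          have hpee : inPos s (p ++ [j]) :=
            inPos_append' hppos (inPos_singleton.2 hQBp.2.2.1)
          have HEp : k = 0 ∨ QC (QP ℓ (k-1)) (ℓ^k) (subtree s p) j := by
            cases k with
            | zero => exact Or.inl rfl
            | succ k' => exact Or.inr ((QS_succ_def.1 hQSp).2.2)
          have HDp : k = 0 ∨ ∃ DC : Finset (List ℕ),
              (∀ v ∈ DC, ∀ v' ∈ DC, v <+: v' ∨ v' <+: v) ∧
              (∀ v ∈ DC, mu vps s (p ++ [dd]) <+: v ∧ inPos (applyHom φ s) v ∧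
                QP ℓ (k-1) (subtree (applyHom φ s) v)) ∧ ℓ^k ≤ DC.card := by
            cases k with
            | zero => exact Or.inl rfl
            | succ k' =>
              right
              obtain ⟨D, hDch, hDmem, hDcard⟩ := chain_from_QP hl hvNpos hvNQP
              refine ⟨D, hDch, ?_, hDcard⟩
              intro v hv
              obtain ⟨h1, h2, h3⟩ := hDmem v hv
              exact ⟨((mu_mono vps hpNpos hpddN).trans hvNmu).trans h1, h2, h3⟩
          obtain ⟨v, h1, h2, h3, h4, h5⟩ := hstep p hppos dd j heene hpdd hpee HEp HDp
          exact ⟨v, h1, h2, h3, fun _ => ⟨dd, hpddN, h4, h5⟩⟩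
        · -- use e := i
          have heene : dd ≠ i := fun h => hidd h.symm
          have hpee : inPos s (p ++ [i]) :=
            inPos_append' hppos (inPos_singleton.2 hQBp.2.1)
          have HEp : k = 0 ∨ QC (QP ℓ (k-1)) (ℓ^k) (subtree s p) i := by
            cases k with
            | zero => exact Or.inl rfl
            | succ k' => exact Or.inr ((QS_succ_def.1 hQSp).2.1)
          have HDp : k = 0 ∨ ∃ DC : Finset (List ℕ),
              (∀ v ∈ DC, ∀ v' ∈ DC, v <+: v' ∨ v' <+: v) ∧
              (∀ v ∈ DC, mu vps s (p ++ [dd]) <+: v ∧ inPos (applyHom φ s) v ∧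
                QP ℓ (k-1) (subtree (applyHom φ s) v)) ∧ ℓ^k ≤ DC.card := by
            cases k with
            | zero => exact Or.inl rfl
            | succ k' =>
              right
              obtain ⟨D, hDch, hDmem, hDcard⟩ := chain_from_QP hl hvNpos hvNQP
              refine ⟨D, hDch, ?_, hDcard⟩
              intro v hv
              obtain ⟨h1, h2, h3⟩ := hDmem v hv
              exact ⟨((mu_mono vps hpNpos hpddN).trans hvNmu).trans h1, h2, h3⟩
          obtain ⟨v, h1, h2, h3, h4, h5⟩ := hstep p hppos dd i heene hpdd hpee HEp HDp
          exact ⟨v, h1, h2, h3, fun _ => ⟨dd, hpddN, h4, h5⟩⟩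
  have hGOOD' : ∀ p, ∃ v, p ∈ C → inPos (applyHom φ s) v ∧
      QP ℓ k (subtree (applyHom φ s) v) ∧
      mu vps s p <+: v ∧ (p ≠ pN → ∃ dd : ℕ, (p ++ [dd]) <+: pN ∧
        v <+: mu vps s (p ++ [dd]) ∧ v.length < (mu vps s (p ++ [dd])).length) := by
    intro p
    by_cases hp : p ∈ C
    · obtain ⟨v, hv⟩ := hGOOD p hp
      exact ⟨v, fun _ => hv⟩
    · exact ⟨[], fun h => absurd h hp⟩
  choose f hf using hGOOD'
  have hkey : ∀ p ∈ C, ∀ p' ∈ C, p ≠ p' → p <+: p' →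
      f p <+: f p' ∧ (f p).length < (f p').length := by
    intro p hp p' hp' hne' hpp
    obtain ⟨g1, g2, g3, g4⟩ := hf p hp
    obtain ⟨g1', g2', g3', g4'⟩ := hf p' hp'
    have hplen : p.length < p'.length := by
      have := hpp.length_le
      rcases Nat.lt_or_ge p.length p'.length with h | h
      · exact h
      · exact absurd (hpp.eq_of_length (le_antisymm this h)) hne'
    have hppN : p ≠ pN := by
      intro heq
      subst heq
      have := (hpre p' hp').length_le
      omega
    obtain ⟨dd, hdd1, hdd2, hdd3⟩ := g4 hppN
    have hddp' : (p ++ [dd]) <+: p' := by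
      apply prefix_of_prefix_length_le hdd1 (hpre p' hp')
      simp only [List.length_append, List.length_cons, List.length_nil]
      omega
    have hmu : mu vps s (p ++ [dd]) <+: mu vps s p' := by
      obtain ⟨e, rfl⟩ := hddp'
      rw [mu_append vps (s := s) (p := p ++ [dd]) (p' := e)
        (inPos_of_append (hmem _ hp').1)]
      exact ⟨_, rfl⟩
    constructor
    · exact hdd2.trans (hmu.trans g3')
    · have h1 := hmu.length_le
      have h2 := g3'.length_le
      omega
  refine ⟨C.image f, ?_, ?_, ?_⟩
  · intro v hv v' hv'
    rw [Finset.mem_image] at hv hv'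
    obtain ⟨p, hp, rfl⟩ := hv
    obtain ⟨p', hp', rfl⟩ := hv'
    by_cases hpp : p = p'
    · subst hpp; left; exact List.prefix_refl _
    rcases hch p hp p' hp' with h | h
    · exact Or.inl (hkey p hp p' hp' hpp h).1
    · exact Or.inr (hkey p' hp' p hp (Ne.symm hpp) h).1
  · intro v hv
    rw [Finset.mem_image] at hv
    obtain ⟨p, hp, rfl⟩ := hv
    obtain ⟨g1, g2, g3, -⟩ := hf p hp
    exact ⟨g1, g2, p, hp, g3⟩
  · rw [Finset.card_image_of_injOn]
    intro p hp p' hp' hfe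
    by_contra hne'
    rcases hch p hp p' hp' with h | h
    · have := (hkey p hp p' hp' hne' h).2
      rw [hfe] at this
      omega
    · have := (hkey p' hp' p hp (Ne.symm hne') h).2
      rw [hfe] at this
      omega

end CompleteHom

section Assembly

lemma cAll {Γ Δ : Type} {arΓ : Γ → ℕ} {arΔ : Δ → ℕ} {φ : ∀ g : Γ, TreeX arΔ (arΓ g)}
    {ℓ : ℕ} {vps : ∀ g : Γ, ∀ i : Fin (arΓ g), List ℕ} (hl : 1 ≤ ℓ)
    (hvps : ∀ (g : Γ) (i : Fin (arΓ g)),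
      inPos (φ g) (vps g i) ∧ root (subtree (φ g) (vps g i)) = Sum.inr i) :
    ∀ k, StG φ ℓ vps k ∧ StC φ ℓ vps k := by
  intro k
  induction k with
  | zero =>
    have hG := cG hl hvps (Or.inl rfl)
    exact ⟨hG, cC hl hvps hG (Or.inl rfl)⟩
  | succ k ih =>
    have hG := cG (k := k+1) hl hvps (Or.inr ih.2)
    exact ⟨hG, cC hl hvps hG (Or.inr ih.2)⟩

lemma step {Γ' Δ₀ Δ₁ : Type} {arΓ' : Γ' → ℕ} {arΔ₀ : Δ₀ → ℕ} {arΔ₁ : Δ₁ → ℕ}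
    (ψ' : ∀ g : Γ', TreeX arΔ₀ (arΓ' g)) (φ' : ∀ g : Γ', TreeX arΔ₁ (arΓ' g))
    {ℓ : ℕ} (hl : 1 ≤ ℓ) (hlin : Linear ψ') (hcom : Complete φ')
    (hht : ∀ g, height (ψ' g) < ℓ) (s : Tree arΓ') {k : ℕ}
    (h : ∃ v, inPos (applyHom ψ' s) v ∧ QP ℓ (k+1) (subtree (applyHom ψ' s) v)) :
    ∃ v, inPos (applyHom φ' s) v ∧ QP ℓ k (subtree (applyHom φ' s) v) := by
  classical
  obtain ⟨v, hv1, hv2⟩ := h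
  have hA := (linAll hlin hht hl k).1
  obtain ⟨hp1, hp2⟩ := hA s v hv1 hv2
  set vps : ∀ g : Γ', Fin (arΓ' g) → List ℕ :=
    fun g i => Classical.choose (exists_var_pos (hcom g i)) with hvpsdef
  have hvps : ∀ (g : Γ') (i : Fin (arΓ' g)),
      inPos (φ' g) (vps g i) ∧ root (subtree (φ' g) (vps g i)) = Sum.inr i :=
    fun g i => Classical.choose_spec (exists_var_pos (hcom g i))
  obtain ⟨Ch, -, hChmem, hChcard⟩ := (cAll hl hvps k).2 s {org ψ' s v}
    (by intro p hp p' hp'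
        simp only [Finset.mem_singleton] at hp hp'
        subst hp; subst hp'
        exact Or.inl (List.prefix_refl _))
    (by intro p hp
        simp only [Finset.mem_singleton] at hp
        subst hp
        exact ⟨hp1, hp2⟩)
  have : 1 ≤ Ch.card := by simpa using hChcard
  have hne : Ch.Nonempty := Finset.card_pos.1 (by omega)
  obtain ⟨v', hv'⟩ := hne
  exact ⟨v', (hChmem v' hv').1, (hChmem v' hv').2.1⟩

end Assembly

/-- a chain of `n` bimorphism-type relations `B_i = {(ψ̂_i s, φ̂_i s) | s ∈ K_i}`
with linear `ψ_i` and complete `φ_i`, where `ℓ > height(ψ_i(γ))` for all `i` and `γ`: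
if `(t, u)` is in the composition `B_1 ; ⋯ ; B_n` and `SP^ℓ_{n+1}(t) ≠ ∅`, then
`SP^ℓ_1(u) ≠ ∅`. -/
theorem SP_nonempty_of_bimorphism_chain (n : ℕ) (hn : 1 ≤ n)
    (Γ : Fin n → Type) (arΓ : ∀ i, Γ i → ℕ)
    (Δ : Fin (n + 1) → Type) (arΔ : ∀ j, Δ j → ℕ)
    (ψ : ∀ i : Fin n, ∀ g : Γ i, TreeX (arΔ i.castSucc) (arΓ i g))
    (φ : ∀ i : Fin n, ∀ g : Γ i, TreeX (arΔ i.succ) (arΓ i g))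
    (hψ : ∀ i, Linear (ψ i)) (hφ : ∀ i, Complete (φ i))
    (K : ∀ i : Fin n, Set (Tree (arΓ i)))
    (ℓ : ℕ) (hℓ : ∀ (i : Fin n) (γ : Γ i), height (ψ i γ) < ℓ)
    (t : Tree (arΔ 0)) (u : Tree (arΔ (Fin.last n)))
    (hrel : ∃ w : ∀ j : Fin (n + 1), Tree (arΔ j),
        w 0 = t ∧ w (Fin.last n) = u ∧
        ∀ i : Fin n, ∃ s ∈ K i,
          applyHom (ψ i) s = w i.castSucc ∧ applyHom (φ i) s = w i.succ)
    (hSP : (SP ℓ (n + 1) t).Nonempty) :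
    (SP ℓ 1 u).Nonempty := by
  classical
  obtain ⟨w, hw0, hwlast, hrel⟩ := hrel
  obtain ⟨s₀, -, -, -⟩ := hrel ⟨0, hn⟩
  have hl : 1 ≤ ℓ := by have := hℓ ⟨0, hn⟩ (root s₀); omega
  obtain ⟨x, hx⟩ := hSP
  rw [mem_SP_iff] at hx
  have main : ∀ m : ℕ, ∀ hm : m ≤ n, ∃ v, inPos (w ⟨m, by omega⟩) v ∧
      QP ℓ (n + 1 - m) (subtree (w ⟨m, by omega⟩) v) := by
    intro m
    induction m with
    | zero =>
      intro hm
      have h0 : (⟨0, by omega⟩ : Fin (n+1)) = 0 := by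
        apply Fin.ext
        simp
      rw [h0, hw0]
      exact ⟨x, hx.1, hx.2⟩
    | succ m ih =>
      intro hm
      obtain ⟨v, hv1, hv2⟩ := ih (by omega)
      obtain ⟨s, -, hψeq, hφeq⟩ := hrel ⟨m, by omega⟩
      have hv1' : inPos (applyHom (ψ ⟨m, by omega⟩) s) v := by
        rw [hψeq]
        exact hv1
      have hv2' : QP ℓ ((n - m) + 1)
          (subtree (applyHom (ψ ⟨m, by omega⟩) s) v) := by
        rw [hψeq]
        have hidx : (n - m) + 1 = n + 1 - m := by omega
        rw [hidx]
        exact hv2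
      obtain ⟨v', hv'1, hv'2⟩ := step (ψ ⟨m, by omega⟩) (φ ⟨m, by omega⟩) hl (hψ _) (hφ _)
        (hℓ _) s (k := n - m) ⟨v, hv1', hv2'⟩
      rw [hφeq] at hv'1 hv'2
      refine ⟨v', hv'1, ?_⟩
      have hidx2 : n - m = n + 1 - (m + 1) := by omega
      rw [hidx2] at hv'2
      exact hv'2
  obtain ⟨v, hv1, hv2⟩ := main n (le_refl n)
  have hlast : w (Fin.last n) = w ⟨n, by omega⟩ := rfl
  rw [hlast] at hwlast
  rw [hwlast] at hv1 hv2
  have h1 : n + 1 - n = 1 := by omega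
  rw [h1] at hv2
  exact ⟨v, mem_SP_iff.2 ⟨hv1, hv2⟩⟩

end Paper
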